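/- arXiv:2207.04243 — 6 statements merged into one kernel-verified Lean document; each statement's English description precedes it below -/
import Mathlib

section
/- Let (T, Σ) be a measurable space, M a nonempty σ-bounded family of measures on Σ, X a Banach space and θ a Young function. If (f_n) is a sequence of strongly measurable functions T → X with ‖f_n‖_{θ,M} < ∞ for all n and ‖f_n − f_m‖_{θ,M} → 0 as n, m → ∞, then there exists a strongly measurable f : T → X with ‖f‖_{θ,M} < ∞ such that ‖f_n − f‖_{θ,M} → 0 as n → ∞; that is, H^θ(M,X) is complete with respect to ‖·‖_{θ,M}. -/
open MeasureTheory Filter Set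

/-- A Young function: `θ u = ∫₀ᵘ χ(t) dt` for some non-decreasing, left-continuous
`χ : [0,∞) → [0,∞)` with `χ 0 = 0` which is not identically zero. -/
def IsYoungFunction (θ : ℝ → ℝ) : Prop :=
  ∃ χ : ℝ → ℝ,
    (∀ t, 0 ≤ t → 0 ≤ χ t) ∧
    (∀ s t, 0 ≤ s → s ≤ t → χ s ≤ χ t) ∧
    (∀ t, 0 < t → Tendsto χ (nhdsWithin t (Set.Iio t)) (nhds (χ t))) ∧
    χ 0 = 0 ∧
    (∃ t, 0 ≤ t ∧ χ t ≠ 0) ∧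
    (∀ u, 0 ≤ u → θ u = ∫ t in (0:ℝ)..u, χ t)

/-- A family `M` of measures is σ-bounded: `T = ⋃ᵢ Eᵢ` with the `Eᵢ` pairwise disjoint
measurable sets and `sup_{μ ∈ M} μ (Eᵢ) < ∞` for every `i`. -/
def SigmaBounded {T : Type*} [MeasurableSpace T] (M : Set (Measure T)) : Prop :=
  ∃ E : ℕ → Set T,
    (∀ i, MeasurableSet (E i)) ∧
    (Pairwise fun i j => Disjoint (E i) (E j)) ∧
    (⋃ i, E i) = Set.univ ∧
    ∀ i, (⨆ μ ∈ M, μ (E i)) < ⊤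

/-- The Luxemburg norm of `f` with respect to the Young function `θ` and the family
of measures `M` : `inf {k > 0 : sup_{μ ∈ M} ∫ θ(‖f‖/k) dμ ≤ 1}`. -/
noncomputable def luxNormM {T X : Type*} [MeasurableSpace T] [NormedAddCommGroup X]
    (θ : ℝ → ℝ) (M : Set (Measure T)) (f : T → X) : ENNReal :=
  sInf {k : ENNReal | 0 < k ∧ k ≠ ⊤ ∧
    ∀ μ ∈ M, ∫⁻ t, ENNReal.ofReal (θ (‖f t‖ / k.toReal)) ∂μ ≤ 1}

private lemma young_key {θ χ : ℝ → ℝ}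
    (hmono : ∀ s t, 0 ≤ s → s ≤ t → χ s ≤ χ t)
    (hθeq : ∀ u, 0 ≤ u → θ u = ∫ t in (0:ℝ)..u, χ t)
    {u v : ℝ} (hu : 0 ≤ u) (huv : u ≤ v) :
    χ u * (v - u) ≤ θ v - θ u ∧ θ v - θ u ≤ χ v * (v - u) := by
  have hv : 0 ≤ v := hu.trans huv
  have hInt : ∀ a b : ℝ, 0 ≤ a → a ≤ b → IntervalIntegrable χ MeasureTheory.volume a b := by
    intro a b ha hab
    apply MonotoneOn.intervalIntegrable
    intro x hx y hy hxy
    rw [Set.uIcc_of_le hab] at hx hy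
    exact hmono x y (ha.trans hx.1) hxy
  have h0u := hInt 0 u le_rfl hu
  have huv' := hInt u v hu huv
  have hsplit : θ v - θ u = ∫ t in u..v, χ t := by
    rw [hθeq u hu, hθeq v hv, ← intervalIntegral.integral_add_adjacent_intervals h0u huv']
    ring
  constructor
  · rw [hsplit]
    calc χ u * (v - u) = ∫ _ in u..v, χ u := by
          rw [intervalIntegral.integral_const, smul_eq_mul]; ring
      _ ≤ ∫ t in u..v, χ t :=
          intervalIntegral.integral_mono_on huv intervalIntegrable_const huv'
            (fun x hx => hmono u x hu hx.1)
  · rw [hsplit]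
    calc (∫ t in u..v, χ t) ≤ ∫ _ in u..v, χ v :=
          intervalIntegral.integral_mono_on huv huv' intervalIntegrable_const
            (fun x hx => hmono x v (hu.trans hx.1) hx.2)
      _ = χ v * (v - u) := by rw [intervalIntegral.integral_const, smul_eq_mul]; ring

private lemma young_props {θ : ℝ → ℝ} (hθ : IsYoungFunction θ) :
    (∀ u v, 0 ≤ u → u ≤ v → θ u ≤ θ v) ∧ (∀ u, 0 ≤ u → 0 ≤ θ u) ∧
    (∀ x y, 0 ≤ x → 0 ≤ y → θ ((x + y) / 2) ≤ (θ x + θ y) / 2) ∧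
    Continuous (fun u => θ (max u 0)) ∧
    (∀ C : ℝ, ∃ u, 0 < u ∧ C ≤ θ u) := by
  obtain ⟨χ, hχ0, hmono, -, hχzero, ⟨t₀, ht₀, hχt₀⟩, hθeq⟩ := hθ
  have key : ∀ {u v : ℝ}, 0 ≤ u → u ≤ v →
      χ u * (v - u) ≤ θ v - θ u ∧ θ v - θ u ≤ χ v * (v - u) :=
    fun hu huv => young_key hmono hθeq hu huv
  have θ0 : θ 0 = 0 := by rw [hθeq 0 le_rfl, intervalIntegral.integral_same]
  have θmono : ∀ u v, 0 ≤ u → u ≤ v → θ u ≤ θ v := by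
    intro u v hu huv
    have h := (key hu huv).1
    nlinarith [hχ0 u hu]
  have θnonneg : ∀ u, 0 ≤ u → 0 ≤ θ u := fun u hu => θ0 ▸ θmono 0 u le_rfl hu
  have θmid : ∀ x y, 0 ≤ x → 0 ≤ y → θ ((x + y) / 2) ≤ (θ x + θ y) / 2 := by
    have main : ∀ x y, 0 ≤ x → x ≤ y → θ ((x + y) / 2) ≤ (θ x + θ y) / 2 := by
      intro x y hx hxy
      set m := (x + y) / 2 with hm
      have hxm : x ≤ m := by rw [hm]; linarith
      have hmy : m ≤ y := by rw [hm]; linarith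
      have h1 := (key hx hxm).2
      have h2 := (key (hx.trans hxm) hmy).1
      have he : m - x = y - m := by rw [hm]; ring
      rw [he] at h1
      linarith
    intro x y hx hy
    rcases le_total x y with h | h
    · exact main x y hx h
    · rw [add_comm x y]; linarith [main y x hy h]
  refine ⟨θmono, θnonneg, θmid, ?_, ?_⟩
  · rw [continuous_iff_continuousAt]
    intro a
    set B := |a| + 1 with hBdef
    have hB0 : (0:ℝ) ≤ B := by positivity
    have hub : ∀ w ∈ Set.Ioo (a - 1) (a + 1), max w 0 ≤ B := by
      intro w hw
      refine max_le ?_ hB0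
      have := hw.2
      rcases abs_cases a with ⟨h1, h2⟩ | ⟨h1, h2⟩ <;> rw [hBdef] <;> linarith
    have hstep : ∀ x y, 0 ≤ x → x ≤ y → y ≤ B → θ y - θ x ≤ χ B * (y - x) := by
      intro x y hx hxy hyB
      have h1 := (key hx hxy).2
      have h2 := hmono y B (hx.trans hxy) hyB
      nlinarith
    have hlip : LipschitzOnWith (χ B).toNNReal (fun u => θ (max u 0))
        (Set.Ioo (a - 1) (a + 1)) := by
      apply LipschitzOnWith.of_dist_le_mul
      intro u hu v hv
      have hcoe : ((χ B).toNNReal : ℝ) = χ B := Real.coe_toNNReal _ (hχ0 B hB0)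
      rw [Real.dist_eq, Real.dist_eq, hcoe]
      have habs : |max u 0 - max v 0| ≤ |u - v| := abs_max_sub_max_le_abs u v 0
      have hχB : 0 ≤ χ B := hχ0 B hB0
      rcases le_total (max u 0) (max v 0) with h | h
      · have h1 := hstep (max u 0) (max v 0) (le_max_right _ _) h (hub v hv)
        have h2 : θ (max u 0) ≤ θ (max v 0) := θmono _ _ (le_max_right _ _) h
        rw [abs_of_nonpos (by linarith)]
        have h3 : max v 0 - max u 0 ≤ |u - v| := by
          calc max v 0 - max u 0 ≤ |max v 0 - max u 0| := le_abs_self _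
            _ ≤ |v - u| := abs_max_sub_max_le_abs v u 0
            _ = |u - v| := abs_sub_comm v u
        nlinarith
      · have h1 := hstep (max v 0) (max u 0) (le_max_right _ _) h (hub u hu)
        have h2 : θ (max v 0) ≤ θ (max u 0) := θmono _ _ (le_max_right _ _) h
        rw [abs_of_nonneg (by linarith)]
        have h3 : max u 0 - max v 0 ≤ |u - v| := by
          calc max u 0 - max v 0 ≤ |max u 0 - max v 0| := le_abs_self _
            _ ≤ |u - v| := abs_max_sub_max_le_abs u v 0
        nlinarith
    exact hlip.continuousOn.continuousAt
      (Ioo_mem_nhds (by linarith) (by linarith))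
  · intro C
    have hχt₀' : 0 < χ t₀ := lt_of_le_of_ne (hχ0 t₀ ht₀) (Ne.symm hχt₀)
    set d := (max C 0 + 1) / χ t₀ with hd
    have hmax : (0:ℝ) ≤ max C 0 := le_max_right _ _
    have hd0 : 0 < d := by rw [hd]; positivity
    refine ⟨t₀ + d, by positivity, ?_⟩
    have h := (key ht₀ (by linarith : t₀ ≤ t₀ + d)).1
    have h2 := θnonneg t₀ ht₀
    have h3 : χ t₀ * d = max C 0 + 1 := by rw [hd]; field_simp
    have h4 : t₀ + d - t₀ = d := by ring
    nlinarith [le_max_left C 0]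

/-- The admissible set in the definition of the Luxemburg norm. -/
private def luxSet {T X : Type*} [MeasurableSpace T] [NormedAddCommGroup X]
    (θ : ℝ → ℝ) (M : Set (Measure T)) (f : T → X) : Set ENNReal :=
  {k : ENNReal | 0 < k ∧ k ≠ ⊤ ∧
    ∀ μ ∈ M, ∫⁻ t, ENNReal.ofReal (θ (‖f t‖ / k.toReal)) ∂μ ≤ 1}

private lemma luxNormM_eq {T X : Type*} [MeasurableSpace T] [NormedAddCommGroup X]
    (θ : ℝ → ℝ) (M : Set (Measure T)) (f : T → X) :
    luxNormM θ M f = sInf (luxSet θ M f) := rfl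

/-- `H^θ(M,X)` is complete with respect to `‖·‖_{θ,M}`. -/
theorem henstockOrlicz_complete {T X : Type*} [MeasurableSpace T]
    [NormedAddCommGroup X] [NormedSpace ℝ X] [CompleteSpace X]
    (M : Set (Measure T)) (hne : M.Nonempty) (hσ : SigmaBounded M)
    (θ : ℝ → ℝ) (hθ : IsYoungFunction θ)
    (f : ℕ → T → X) (hmeas : ∀ n, StronglyMeasurable (f n))
    (hfin : ∀ n, luxNormM θ M (f n) < ⊤)
    (hcauchy : Tendsto (fun p : ℕ × ℕ => luxNormM θ M (fun t => f p.1 t - f p.2 t))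
      atTop (nhds 0)) :
    ∃ g : T → X, StronglyMeasurable g ∧ luxNormM θ M g < ⊤ ∧
      Tendsto (fun n => luxNormM θ M (fun t => f n t - g t)) atTop (nhds 0) := by
  classical
  obtain ⟨θmono, θnonneg, θmid, θcont, θgrow⟩ := young_props hθ
  -- measurability of the integrands
  have hmeasInt : ∀ (h : T → X), StronglyMeasurable h → ∀ c : ℝ, 0 ≤ c →
      Measurable fun t => ENNReal.ofReal (θ (‖h t‖ / c)) := by
    intro h hh c hc
    have he : (fun t => ENNReal.ofReal (θ (‖h t‖ / c)))
        = fun t => ENNReal.ofReal (θ (max (‖h t‖ / c) 0)) := by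
      funext t; rw [max_eq_left (div_nonneg (norm_nonneg _) hc)]
    rw [he]
    exact ENNReal.measurable_ofReal.comp
      (θcont.measurable.comp ((hh.norm.measurable).div_const c))
  -- upward closure of the admissible set
  have hS_up : ∀ (h : T → X) (k₁ k₂ : ENNReal), k₁ ∈ luxSet θ M h → k₁ ≤ k₂ → k₂ ≠ ⊤ →
      k₂ ∈ luxSet θ M h := by
    intro h k₁ k₂ hk₁ hle hk₂top
    have hk₁top : k₁ ≠ ⊤ := ne_top_of_le_ne_top hk₂top hle
    have h1 : 0 < k₁.toReal := ENNReal.toReal_pos hk₁.1.ne' hk₁top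
    have h2 : k₁.toReal ≤ k₂.toReal := ENNReal.toReal_mono hk₂top hle
    refine ⟨lt_of_lt_of_le hk₁.1 hle, hk₂top,
      fun μ hμ => le_trans (lintegral_mono fun t => ?_) (hk₁.2.2 μ hμ)⟩
    apply ENNReal.ofReal_le_ofReal
    refine θmono _ _ (div_nonneg (norm_nonneg _) (h1.trans_le h2).le) ?_
    gcongr
  have hmem_of_lt : ∀ (h : T → X) (k : ENNReal), 0 < k → k ≠ ⊤ →
      luxNormM θ M h < k → k ∈ luxSet θ M h := by
    intro h k hk hktop hlt
    rw [luxNormM_eq] at hlt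
    obtain ⟨k₁, hk₁S, hk₁k⟩ := sInf_lt_iff.mp hlt
    exact hS_up h k₁ k hk₁S hk₁k.le hktop
  -- Chebyshev-type inequality
  have cheby : ∀ (h : T → X), StronglyMeasurable h → ∀ ε u : ℝ, 0 < ε → 0 < u →
      luxNormM θ M h < ENNReal.ofReal (ε / u) →
      ∀ μ ∈ M, μ {t | ε ≤ ‖h t‖} ≤ (ENNReal.ofReal (θ u))⁻¹ := by
    intro h hh ε u hε hu hlt μ hμ
    rw [luxNormM_eq] at hlt
    obtain ⟨k₁, hk₁S, hk₁⟩ := sInf_lt_iff.mp hlt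
    have hk₁top : k₁ ≠ ⊤ := ne_top_of_lt hk₁
    have hk₁0 : 0 < k₁.toReal := ENNReal.toReal_pos hk₁S.1.ne' hk₁top
    have hkr : k₁.toReal < ε / u := by
      rwa [ENNReal.lt_ofReal_iff_toReal_lt hk₁top] at hk₁
    have hu' : u ≤ ε / k₁.toReal := by
      rw [le_div_iff₀ hk₁0]
      have h2 := (lt_div_iff₀ hu).mp hkr
      nlinarith
    have hsub : {t | ε ≤ ‖h t‖} ⊆
        {t | ENNReal.ofReal (θ u) ≤ ENNReal.ofReal (θ (‖h t‖ / k₁.toReal))} := by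
      intro t ht
      simp only [Set.mem_setOf_eq] at ht ⊢
      apply ENNReal.ofReal_le_ofReal
      refine θmono _ _ hu.le (hu'.trans ?_)
      gcongr
    have hmle := mul_meas_ge_le_lintegral₀
      ((hmeasInt h hh k₁.toReal hk₁0.le).aemeasurable (μ := μ)) (ENNReal.ofReal (θ u))
    have h1 : ENNReal.ofReal (θ u) * μ {t | ε ≤ ‖h t‖} ≤ 1 :=
      le_trans (le_trans (mul_le_mul_right (measure_mono hsub) _) hmle) (hk₁S.2.2 μ hμ)
    exact ENNReal.le_inv_iff_mul_le.mpr (by rwa [mul_comm])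
  -- choose growth points for θ
  choose uu huu0 huuθ using fun k : ℕ => θgrow ((2:ℝ)^k)
  have hδpos : ∀ k : ℕ, 0 < ENNReal.ofReal ((1/2:ℝ)^k / uu k) := fun k =>
    ENNReal.ofReal_pos.mpr (by have := huu0 k; positivity)
  -- choose indices
  have hNex : ∀ k : ℕ, ∃ N : ℕ, ∀ p q, N ≤ p → N ≤ q →
      luxNormM θ M (fun t => f p t - f q t) < ENNReal.ofReal ((1/2:ℝ)^k / uu k) := by
    intro k
    have h2 := ENNReal.tendsto_nhds_zero.mp hcauchy
      (ENNReal.ofReal ((1/2:ℝ)^k / uu k) / 2) (ENNReal.half_pos (hδpos k).ne')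
    obtain ⟨a, ha⟩ := eventually_atTop.mp h2
    refine ⟨max a.1 a.2, fun p q hp hq => lt_of_le_of_lt
      (ha (p, q) ⟨le_trans (le_max_left _ _) hp, le_trans (le_max_right _ _) hq⟩)
      (ENNReal.half_lt_self (hδpos k).ne' ENNReal.ofReal_ne_top)⟩
  choose N hN using hNex
  set n : ℕ → ℕ := fun k => k + (Finset.range (k + 1)).sup N with hn
  have hn_ge : ∀ j k, j ≤ k → N j ≤ n k := fun j k hjk =>
    le_trans (Finset.le_sup (Finset.mem_range.mpr (Nat.lt_succ_of_le hjk)))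
      (Nat.le_add_left _ _)
  have hn_self : ∀ k, k ≤ n k := fun k => Nat.le_add_right _ _
  -- the bad sets
  set B : ℕ → Set T := fun k => {t | (1/2:ℝ)^k ≤ ‖f (n (k+1)) t - f (n k) t‖} with hB
  have hBm : ∀ k, MeasurableSet (B k) := fun k =>
    measurableSet_le measurable_const (((hmeas _).sub (hmeas _)).norm.measurable)
  have hBμ : ∀ μ ∈ M, ∀ k, μ (B k) ≤ 2⁻¹ ^ k := by
    intro μ hμ k
    have h1 := cheby (fun t => f (n (k+1)) t - f (n k) t) ((hmeas _).sub (hmeas _))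
      ((1/2:ℝ)^k) (uu k) (by positivity) (huu0 k)
      (hN k (n (k+1)) (n k) (hn_ge k (k+1) (Nat.le_succ k)) (hn_ge k k le_rfl)) μ hμ
    refine le_trans h1 ?_
    rw [← ENNReal.inv_pow]
    refine ENNReal.inv_le_inv.mpr ?_
    calc (2:ENNReal)^k = ENNReal.ofReal ((2:ℝ)^k) := by
          rw [ENNReal.ofReal_pow (by norm_num), ENNReal.ofReal_ofNat]
      _ ≤ ENNReal.ofReal (θ (uu k)) := ENNReal.ofReal_le_ofReal (huuθ k)
  -- the exceptional set
  set A : Set T := limsup B atTop with hA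
  have hAm : MeasurableSet A := MeasurableSet.measurableSet_limsup hBm
  have hAμ : ∀ μ ∈ M, μ A = 0 := by
    intro μ hμ
    apply measure_limsup_atTop_eq_zero
    refine ne_top_of_le_ne_top ?_ (ENNReal.tsum_le_tsum (hBμ μ hμ))
    rw [ENNReal.tsum_geometric, ENNReal.one_sub_inv_two, inv_inv]
    exact ENNReal.ofNat_ne_top
  -- convergence off the exceptional set
  have hconv : ∀ t ∉ A, ∃ l, Tendsto (fun k => f (n k) t) atTop (nhds l) := by
    intro t ht
    rw [hA, mem_limsup_iff_frequently_mem, not_frequently] at ht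
    obtain ⟨K, hK⟩ := eventually_atTop.mp ht
    apply cauchySeq_tendsto_of_complete
    apply cauchySeq_of_summable_dist
    apply (summable_nat_add_iff K).mp
    refine Summable.of_nonneg_of_le (fun j => dist_nonneg) (fun j => ?_)
      (summable_geometric_of_lt_one (by norm_num) (by norm_num : (1/2:ℝ) < 1))
    have h1 := hK (j + K) (Nat.le_add_left K j)
    simp only [hB, Set.mem_setOf_eq, not_le] at h1
    rw [dist_eq_norm]
    calc ‖f (n (j + K)) t - f (n (j + K + 1)) t‖
        = ‖f (n (j + K + 1)) t - f (n (j + K)) t‖ := norm_sub_rev _ _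
      _ ≤ (1/2:ℝ)^(j+K) := h1.le
      _ ≤ (1/2:ℝ)^j := pow_le_pow_of_le_one (by norm_num) (by norm_num)
          (Nat.le_add_right j K)
  -- the modified sequence and the limit function
  set F : ℕ → T → X := fun k t => if t ∈ A then 0 else f (n k) t with hF
  have hFm : ∀ k, StronglyMeasurable (F k) := fun k =>
    StronglyMeasurable.ite hAm stronglyMeasurable_const (hmeas _)
  have hFconv : ∀ t, ∃ l, Tendsto (fun k => F k t) atTop (nhds l) := by
    intro t
    by_cases ht : t ∈ A
    · exact ⟨0, by simp only [hF, if_pos ht]; exact tendsto_const_nhds⟩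
    · obtain ⟨l, hl⟩ := hconv t ht
      exact ⟨l, hl.congr (fun k => by simp only [hF, if_neg ht])⟩
  set g : T → X := fun t => limUnder atTop (fun k => F k t) with hg
  have hgt : ∀ t, Tendsto (fun k => F k t) atTop (nhds (g t)) := fun t =>
    tendsto_nhds_limUnder (hFconv t)
  have hgm : StronglyMeasurable g :=
    stronglyMeasurable_of_tendsto atTop hFm (tendsto_pi_nhds.mpr hgt)
  -- a.e. convergence for each measure in M
  have hae : ∀ μ ∈ M, ∀ᵐ t ∂μ, Tendsto (fun k => f (n k) t) atTop (nhds (g t)) := by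
    intro μ hμ
    have h0 : ∀ᵐ t ∂μ, t ∉ A := by
      rw [ae_iff]; simpa [not_not] using hAμ μ hμ
    filter_upwards [h0] with t ht
    exact (hgt t).congr (fun k => by simp only [hF, if_neg ht])
  -- key Fatou step
  have hkey : ∀ (p : ℕ) (c : ENNReal), 0 < c → c ≠ ⊤ →
      (∀ᶠ m in atTop, c ∈ luxSet θ M (fun t => f p t - f (n m) t)) →
      c ∈ luxSet θ M (fun t => f p t - g t) := by
    intro p c hc hctop hev
    refine ⟨hc, hctop, fun μ hμ => ?_⟩
    have hcr : (0:ℝ) ≤ c.toReal := ENNReal.toReal_nonneg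
    have hpt : ∀ᵐ t ∂μ,
        ENNReal.ofReal (θ (‖f p t - g t‖ / c.toReal)) =
          liminf (fun m => ENNReal.ofReal (θ (‖f p t - f (n m) t‖ / c.toReal))) atTop := by
      filter_upwards [hae μ hμ] with t ht
      have h1 : Tendsto (fun m => ‖f p t - f (n m) t‖ / c.toReal) atTop
          (nhds (‖f p t - g t‖ / c.toReal)) :=
        ((tendsto_const_nhds.sub ht).norm).div_const _
      have h2 : Tendsto (fun m => ENNReal.ofReal (θ (max (‖f p t - f (n m) t‖ / c.toReal) 0)))
          atTop (nhds (ENNReal.ofReal (θ (max (‖f p t - g t‖ / c.toReal) 0)))) :=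
        (ENNReal.continuous_ofReal.tendsto _).comp ((θcont.tendsto _).comp h1)
      have e1 : (fun m => ENNReal.ofReal (θ (max (‖f p t - f (n m) t‖ / c.toReal) 0)))
          = fun m => ENNReal.ofReal (θ (‖f p t - f (n m) t‖ / c.toReal)) := by
        funext m; rw [max_eq_left (div_nonneg (norm_nonneg _) hcr)]
      rw [e1, max_eq_left (div_nonneg (norm_nonneg _) hcr)] at h2
      exact h2.liminf_eq.symm
    calc ∫⁻ t, ENNReal.ofReal (θ (‖f p t - g t‖ / c.toReal)) ∂μ
        = ∫⁻ t, liminf (fun m =>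
            ENNReal.ofReal (θ (‖f p t - f (n m) t‖ / c.toReal))) atTop ∂μ :=
          lintegral_congr_ae hpt
      _ ≤ liminf (fun m =>
            ∫⁻ t, ENNReal.ofReal (θ (‖f p t - f (n m) t‖ / c.toReal)) ∂μ) atTop :=
          lintegral_liminf_le (fun m => hmeasInt _ ((hmeas p).sub (hmeas _)) c.toReal hcr)
      _ ≤ 1 := liminf_le_of_frequently_le' ((hev.mono (fun m hm => hm.2.2 μ hμ)).frequently)
  -- the convergence in Luxemburg norm
  have htend : Tendsto (fun p => luxNormM θ M (fun t => f p t - g t)) atTop (nhds 0) := by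
    rw [ENNReal.tendsto_nhds_zero]
    intro ε hε
    set c := min 1 ε with hc
    have hc0 : 0 < c := lt_min one_pos hε
    have hctop : c ≠ ⊤ := ne_top_of_le_ne_top ENNReal.one_ne_top (min_le_left _ _)
    obtain ⟨a, ha⟩ := eventually_atTop.mp
      (ENNReal.tendsto_nhds_zero.mp hcauchy (c / 2) (ENNReal.half_pos hc0.ne'))
    refine eventually_atTop.mpr ⟨max a.1 a.2, fun p hp => ?_⟩
    have hmem : c ∈ luxSet θ M (fun t => f p t - g t) := by
      apply hkey p c hc0 hctop
      refine eventually_atTop.mpr ⟨max a.1 a.2, fun m hm => ?_⟩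
      apply hmem_of_lt _ _ hc0 hctop
      have h1 : luxNormM θ M (fun t => f p t - f (n m) t) ≤ c / 2 :=
        ha (p, n m) ⟨le_trans (le_max_left _ _) hp,
          le_trans (le_trans (le_max_right _ _) hm) (hn_self m)⟩
      exact lt_of_le_of_lt h1 (ENNReal.half_lt_self hc0.ne' hctop)
    calc luxNormM θ M (fun t => f p t - g t) ≤ c := by
          rw [luxNormM_eq]; exact sInf_le hmem
      _ ≤ ε := min_le_right _ _
  -- finiteness of the norm of g
  have hgfin : luxNormM θ M g < ⊤ := by
    have h1 : ∀ᶠ p in atTop, luxNormM θ M (fun t => f p t - g t) ≤ 2⁻¹ :=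
      ENNReal.tendsto_nhds_zero.mp htend 2⁻¹ (by norm_num)
    obtain ⟨p, hp⟩ := h1.exists
    have hk₁ : (1:ENNReal) ∈ luxSet θ M (fun t => f p t - g t) :=
      hmem_of_lt _ 1 one_pos ENNReal.one_ne_top
        (lt_of_le_of_lt hp (ENNReal.inv_lt_one.mpr ENNReal.one_lt_two))
    have hfp := hfin p
    rw [luxNormM_eq] at hfp
    obtain ⟨k₂, hk₂S, hk₂lt⟩ := sInf_lt_iff.mp hfp
    set K : ENNReal := max 1 k₂ with hK
    have hKlt : K < ⊤ := max_lt ENNReal.one_lt_top hk₂lt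
    have hKtop : K ≠ ⊤ := hKlt.ne
    have hK0 : 0 < K := lt_of_lt_of_le one_pos (le_max_left _ _)
    have hKr : 0 < K.toReal := ENNReal.toReal_pos hK0.ne' hKtop
    have hKS1 : K ∈ luxSet θ M (fun t => f p t - g t) :=
      hS_up _ 1 K hk₁ (le_max_left _ _) hKtop
    have hKS2 : K ∈ luxSet θ M (f p) := hS_up _ k₂ K hk₂S (le_max_right _ _) hKtop
    have h2K : (2 * K) ∈ luxSet θ M g := by
      refine ⟨ENNReal.mul_pos (by norm_num) hK0.ne', ENNReal.mul_ne_top (by norm_num) hKtop,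
        fun μ hμ => ?_⟩
      have htr : (2*K).toReal = 2 * K.toReal := by
        rw [ENNReal.toReal_mul]; norm_num
      have hpt2 : ∀ t, (2:ENNReal) * ENNReal.ofReal (θ (‖g t‖ / (2*K).toReal)) ≤
          ENNReal.ofReal (θ (‖f p t - g t‖ / K.toReal))
            + ENNReal.ofReal (θ (‖f p t‖ / K.toReal)) := by
        intro t
        set x := ‖f p t - g t‖ / K.toReal with hx'
        set y := ‖f p t‖ / K.toReal with hy'
        have hx : 0 ≤ x := div_nonneg (norm_nonneg _) hKr.le
        have hy : 0 ≤ y := div_nonneg (norm_nonneg _) hKr.le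
        have hgle : ‖g t‖ / (2*K).toReal ≤ (x + y)/2 := by
          rw [htr]
          have h1 : ‖g t‖ ≤ ‖f p t - g t‖ + ‖f p t‖ := by
            calc ‖g t‖ = ‖f p t - (f p t - g t)‖ := by rw [sub_sub_cancel]
              _ ≤ ‖f p t‖ + ‖f p t - g t‖ := norm_sub_le _ _
              _ = ‖f p t - g t‖ + ‖f p t‖ := by ring
          have h2 : (x + y)/2 = (‖f p t - g t‖ + ‖f p t‖) / (2 * K.toReal) := by
            rw [hx', hy', ← add_div, div_div, mul_comm]
          rw [h2]
          gcongr
        have h2 : θ (‖g t‖ / (2*K).toReal) ≤ (θ x + θ y)/2 :=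
          le_trans (θmono _ _ (div_nonneg (norm_nonneg _) ENNReal.toReal_nonneg) hgle)
            (θmid x y hx hy)
        calc (2:ENNReal) * ENNReal.ofReal (θ (‖g t‖ / (2*K).toReal))
            = ENNReal.ofReal (2 * θ (‖g t‖ / (2*K).toReal)) := by
              rw [ENNReal.ofReal_mul (by norm_num : (0:ℝ) ≤ 2), ENNReal.ofReal_ofNat]
          _ ≤ ENNReal.ofReal (θ x + θ y) := ENNReal.ofReal_le_ofReal (by linarith)
          _ ≤ _ := ENNReal.ofReal_add_le
      have hmain : 2 * ∫⁻ t, ENNReal.ofReal (θ (‖g t‖ / (2*K).toReal)) ∂μ ≤ 2 := by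
        rw [← lintegral_const_mul' _ _ (by norm_num : (2:ENNReal) ≠ ⊤)]
        refine le_trans (lintegral_mono hpt2) ?_
        rw [lintegral_add_left (hmeasInt (fun t => f p t - g t) ((hmeas p).sub hgm) K.toReal
          ENNReal.toReal_nonneg)]
        calc _ ≤ 1 + 1 := add_le_add (hKS1.2.2 μ hμ) (hKS2.2.2 μ hμ)
          _ = 2 := by norm_num
      have h2' : (2:ENNReal) * (∫⁻ t, ENNReal.ofReal (θ (‖g t‖ / (2*K).toReal)) ∂μ)
          ≤ 2 * 1 := by rw [mul_one]; exact hmain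
      exact (ENNReal.mul_le_mul_iff_right (by norm_num : (2:ENNReal) ≠ 0)
        (by norm_num : (2:ENNReal) ≠ ⊤)).mp h2'
    rw [luxNormM_eq]
    exact lt_of_le_of_lt (sInf_le h2K)
      (lt_top_iff_ne_top.mpr (ENNReal.mul_ne_top (by norm_num) hKtop))
  exact ⟨g, hgm, hgfin, htend⟩
end

section
/- Let (T, Σ) be a measurable space, M a nonempty σ-bounded family of measures on Σ, X a Banach space and θ a Young function. If (f_n) is a sequence of strongly measurable functions T → X with ‖f_n‖_{θ,M} < ∞ for all n and ‖f_n − f_m‖_{θ,M} → 0 as n, m → ∞, then there exist a strongly measurable f : T → X with ‖f‖_{θ,M} < ∞ and ‖f_n − f‖_{θ,M} → 0, and a subsequence (f_{n_k}) such that f_{n_k}(t) → f(t) for every t outside a set N ∈ Σ satisfying μ(N) = 0 for every μ ∈ M (i.e. f_{n_k} → f M-almost everywhere). -/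
open MeasureTheory Filter Set

section Young
variable {θ χ : ℝ → ℝ}
  (hpos : ∀ t, 0 ≤ t → 0 ≤ χ t)
  (hmono : ∀ s t, 0 ≤ s → s ≤ t → χ s ≤ χ t)
  (hθeq : ∀ u, 0 ≤ u → θ u = ∫ t in (0:ℝ)..u, χ t)

include hmono in
theorem chi_intInt {a b : ℝ} (ha : 0 ≤ a) (hab : a ≤ b) :
    IntervalIntegrable χ MeasureTheory.volume a b := by
  apply MonotoneOn.intervalIntegrable
  intro x hx y hy hxy
  rw [Set.uIcc_of_le hab] at hx
  exact hmono x y (le_trans ha hx.1) hxy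

include hmono hθeq in
theorem theta_diff {a b : ℝ} (ha : 0 ≤ a) (hab : a ≤ b) :
    θ b - θ a = ∫ t in a..b, χ t := by
  rw [hθeq a ha, hθeq b (le_trans ha hab)]
  have := intervalIntegral.integral_add_adjacent_intervals
    (chi_intInt hmono (le_refl 0) ha) (chi_intInt hmono ha hab)
  linarith [this]

include hpos hmono hθeq in
theorem theta_diff_le {a b : ℝ} (ha : 0 ≤ a) (hab : a ≤ b) :
    θ b - θ a ≤ χ b * (b - a) := by
  rw [theta_diff hmono hθeq ha hab]
  calc ∫ t in a..b, χ t ≤ ∫ _ in a..b, χ b := by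
        apply intervalIntegral.integral_mono_on hab (chi_intInt hmono ha hab)
          intervalIntegrable_const
        intro x hx; exact hmono x b (le_trans ha hx.1) hx.2
    _ = χ b * (b - a) := by rw [intervalIntegral.integral_const, smul_eq_mul]; ring

include hpos hmono hθeq in
theorem theta_diff_ge {a b : ℝ} (ha : 0 ≤ a) (hab : a ≤ b) :
    χ a * (b - a) ≤ θ b - θ a := by
  rw [theta_diff hmono hθeq ha hab]
  calc χ a * (b - a) = ∫ _ in a..b, χ a := by rw [intervalIntegral.integral_const, smul_eq_mul]; ring
    _ ≤ ∫ t in a..b, χ t := by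
        apply intervalIntegral.integral_mono_on hab intervalIntegrable_const
          (chi_intInt hmono ha hab)
        intro x hx; exact hmono a x ha hx.1

include hθeq in
theorem theta_zero : θ 0 = 0 := by
  rw [hθeq 0 le_rfl, intervalIntegral.integral_same]

include hpos hmono hθeq in
theorem theta_mono {a b : ℝ} (ha : 0 ≤ a) (hab : a ≤ b) : θ a ≤ θ b := by
  have h := theta_diff_ge hpos hmono hθeq ha hab
  nlinarith [hpos a ha]

include hpos hmono hθeq in
theorem theta_nonneg {a : ℝ} (ha : 0 ≤ a) : 0 ≤ θ a := by
  have := theta_mono hpos hmono hθeq le_rfl ha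
  rwa [theta_zero hθeq] at this

include hpos hmono hθeq in
theorem theta_convex {x y p q : ℝ} (hx : 0 ≤ x) (hy : 0 ≤ y) (hp : 0 ≤ p) (hq : 0 ≤ q)
    (hpq : p + q = 1) : θ (p * x + q * y) ≤ p * θ x + q * θ y := by
  have hq' : q = 1 - p := by linarith
  subst hq'
  rcases le_total x y with hxy | hxy
  · have hm1 : x ≤ p * x + (1 - p) * y := by nlinarith
    have hm2 : p * x + (1 - p) * y ≤ y := by nlinarith
    have h1 := theta_diff_le hpos hmono hθeq hx hm1
    have h2 := theta_diff_ge hpos hmono hθeq (le_trans hx hm1) hm2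
    nlinarith [mul_le_mul_of_nonneg_left h1 hp, mul_le_mul_of_nonneg_left h2 hq]
  · have hm1 : y ≤ p * x + (1 - p) * y := by nlinarith
    have hm2 : p * x + (1 - p) * y ≤ x := by nlinarith
    have h1 := theta_diff_le hpos hmono hθeq hy hm1
    have h2 := theta_diff_ge hpos hmono hθeq (le_trans hy hm1) hm2
    nlinarith [mul_le_mul_of_nonneg_left h1 hq, mul_le_mul_of_nonneg_left h2 hp]

include hpos hmono hθeq in
theorem theta_unbounded {t0 : ℝ} (ht0 : 0 ≤ t0) (hc : 0 < χ t0) (C : ℝ) :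
    ∃ u, 0 ≤ u ∧ C ≤ θ u := by
  refine ⟨t0 + max C 0 / χ t0, by positivity, ?_⟩
  have hle : t0 ≤ t0 + max C 0 / χ t0 := le_add_of_nonneg_right (by positivity)
  have h := theta_diff_ge hpos hmono hθeq ht0 hle
  have h2 : χ t0 * (max C 0 / χ t0) = max C 0 := mul_div_cancel₀ _ (ne_of_gt hc)
  have h3 := theta_nonneg hpos hmono hθeq ht0
  nlinarith [le_max_left C 0]

include hpos hmono hθeq in
theorem theta_tendsto {a : ℕ → ℝ} {L : ℝ} (hL : 0 ≤ L) (ha : ∀ k, 0 ≤ a k)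
    (h : Tendsto a atTop (nhds L)) : Tendsto (fun k => θ (a k)) atTop (nhds (θ L)) := by
  rw [tendsto_iff_dist_tendsto_zero]
  have hd : Tendsto (fun k => dist (a k) L) atTop (nhds 0) :=
    tendsto_iff_dist_tendsto_zero.1 h
  apply squeeze_zero' (Eventually.of_forall fun k => dist_nonneg)
    (g := fun k => χ (L + 1) * dist (a k) L)
  · filter_upwards [hd.eventually_lt_const (by norm_num : (0:ℝ) < 1)] with k hk
    have hnn : 0 ≤ χ (L + 1) := hpos _ (by linarith)
    rcases le_total (a k) L with hal | hal
    · have h1 := theta_diff_le hpos hmono hθeq (ha k) hal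
      have h2 : χ L ≤ χ (L + 1) := hmono L (L + 1) hL (by linarith)
      rw [Real.dist_eq, Real.dist_eq,
        abs_of_nonpos (sub_nonpos.2 (theta_mono hpos hmono hθeq (ha k) hal)),
        abs_of_nonpos (sub_nonpos.2 hal)]
      nlinarith [mul_le_mul_of_nonneg_right h2 (sub_nonneg.2 hal)]
    · have hb : a k ≤ L + 1 := by
        rw [Real.dist_eq] at hk; cases abs_lt.1 hk; linarith
      have h1 := theta_diff_le hpos hmono hθeq hL hal
      have h2 : χ (a k) ≤ χ (L + 1) := hmono _ _ (ha k) hb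
      rw [Real.dist_eq, Real.dist_eq,
        abs_of_nonneg (sub_nonneg.2 (theta_mono hpos hmono hθeq hL hal)),
        abs_of_nonneg (sub_nonneg.2 hal)]
      nlinarith [mul_le_mul_of_nonneg_right h2 (sub_nonneg.2 hal)]
  · simpa using tendsto_const_nhds.mul hd
end Young

section Adm
variable {T X : Type*} [MeasurableSpace T] [NormedAddCommGroup X]
variable {M : Set (Measure T)}
variable {θ χ : ℝ → ℝ}

/-- Admissibility of a constant `k` for a function `h` in the Luxemburg norm. -/
def AdmM (θ : ℝ → ℝ) (M : Set (Measure T)) (h : T → X) (k : ENNReal) : Prop :=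
  0 < k ∧ k ≠ ⊤ ∧ ∀ μ ∈ M, ∫⁻ t, ENNReal.ofReal (θ (‖h t‖ / k.toReal)) ∂μ ≤ 1

theorem luxNormM_eq_s1 (h : T → X) : luxNormM θ M h = sInf {k | AdmM θ M h k} := rfl

variable (hpos : ∀ t, 0 ≤ t → 0 ≤ χ t)
  (hmono : ∀ s t, 0 ≤ s → s ≤ t → χ s ≤ χ t)
  (hθeq : ∀ u, 0 ≤ u → θ u = ∫ t in (0:ℝ)..u, χ t)

include hpos hmono hθeq

theorem adm_meas {h : T → X} (hh : StronglyMeasurable h) {K : ℝ} (hK : 0 ≤ K) :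
    Measurable fun t => ENNReal.ofReal (θ (‖h t‖ / K)) := by
  have hm : Monotone fun x : ℝ => θ (max x 0) := by
    intro x y hxy
    exact theta_mono hpos hmono hθeq (le_max_right x 0) (max_le_max hxy le_rfl)
  have heq : (fun t => ENNReal.ofReal (θ (‖h t‖ / K)))
      = fun t => ENNReal.ofReal (θ (max (‖h t‖ / K) 0)) := by
    funext t
    rw [max_eq_left (div_nonneg (norm_nonneg _) hK)]
  rw [heq]
  exact ENNReal.measurable_ofReal.comp (hm.measurable.comp (hh.norm.measurable.div_const K))

theorem adm_upward {h : T → X} {k k' : ENNReal} (hk : AdmM θ M h k) (hle : k ≤ k')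
    (htop : k' ≠ ⊤) : AdmM θ M h k' := by
  obtain ⟨hk0, hktop, hint⟩ := hk
  refine ⟨lt_of_lt_of_le hk0 hle, htop, fun μ hμ => le_trans (lintegral_mono fun t => ?_) (hint μ hμ)⟩
  apply ENNReal.ofReal_le_ofReal
  have h1 : 0 < k.toReal := ENNReal.toReal_pos (ne_of_gt hk0) hktop
  have h2 : k.toReal ≤ k'.toReal := ENNReal.toReal_le_toReal hktop htop |>.2 hle
  exact theta_mono hpos hmono hθeq (div_nonneg (norm_nonneg _) (by linarith))
    (div_le_div_of_nonneg_left (norm_nonneg _) h1 h2)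

theorem adm_add {h1 h2 : T → X} (hm1 : StronglyMeasurable h1) (hm2 : StronglyMeasurable h2)
    {k1 k2 : ENNReal} (hk1 : AdmM θ M h1 k1) (hk2 : AdmM θ M h2 k2) :
    AdmM θ M (fun t => h1 t + h2 t) (k1 + k2) := by
  obtain ⟨h10, h1top, h1int⟩ := hk1
  obtain ⟨h20, h2top, h2int⟩ := hk2
  set a := k1.toReal with ha'
  set b := k2.toReal with hb'
  have ha : 0 < a := ENNReal.toReal_pos (ne_of_gt h10) h1top
  have hb : 0 < b := ENNReal.toReal_pos (ne_of_gt h20) h2top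
  have habtop : k1 + k2 ≠ ⊤ := by
    simp [ENNReal.add_ne_top, h1top, h2top]
  have hab : (k1 + k2).toReal = a + b := ENNReal.toReal_add h1top h2top
  set p := a / (a + b) with hp'
  set q := b / (a + b) with hq'
  have hp : 0 ≤ p := by positivity
  have hq : 0 ≤ q := by positivity
  have hpq : p + q = 1 := by rw [hp', hq']; field_simp
  refine ⟨lt_of_lt_of_le h10 le_self_add, habtop, fun μ hμ => ?_⟩
  have hpt : ∀ t, ENNReal.ofReal (θ (‖h1 t + h2 t‖ / (k1 + k2).toReal))
      ≤ ENNReal.ofReal p * ENNReal.ofReal (θ (‖h1 t‖ / a))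
        + ENNReal.ofReal q * ENNReal.ofReal (θ (‖h2 t‖ / b)) := by
    intro t
    have e1 : θ (‖h1 t + h2 t‖ / (k1 + k2).toReal) ≤ θ ((‖h1 t‖ + ‖h2 t‖) / (a + b)) := by
      rw [hab]
      exact theta_mono hpos hmono hθeq (by positivity)
        (div_le_div_of_nonneg_right (norm_add_le _ _) (by linarith))
    have e2 : (‖h1 t‖ + ‖h2 t‖) / (a + b) = p * (‖h1 t‖ / a) + q * (‖h2 t‖ / b) := by
      rw [hp', hq']; field_simp
    have e3 : θ ((‖h1 t‖ + ‖h2 t‖) / (a + b)) ≤ p * θ (‖h1 t‖ / a) + q * θ (‖h2 t‖ / b) := by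
      rw [e2]
      exact theta_convex hpos hmono hθeq (by positivity) (by positivity) hp hq hpq
    calc ENNReal.ofReal (θ (‖h1 t + h2 t‖ / (k1 + k2).toReal))
        ≤ ENNReal.ofReal (p * θ (‖h1 t‖ / a) + q * θ (‖h2 t‖ / b)) :=
          ENNReal.ofReal_le_ofReal (le_trans e1 e3)
      _ = ENNReal.ofReal (p * θ (‖h1 t‖ / a)) + ENNReal.ofReal (q * θ (‖h2 t‖ / b)) := by
          rw [ENNReal.ofReal_add]
          · exact mul_nonneg hp (theta_nonneg hpos hmono hθeq (by positivity))
          · exact mul_nonneg hq (theta_nonneg hpos hmono hθeq (by positivity))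
      _ = ENNReal.ofReal p * ENNReal.ofReal (θ (‖h1 t‖ / a))
            + ENNReal.ofReal q * ENNReal.ofReal (θ (‖h2 t‖ / b)) := by
          rw [ENNReal.ofReal_mul hp, ENNReal.ofReal_mul hq]
  calc ∫⁻ t, ENNReal.ofReal (θ (‖h1 t + h2 t‖ / (k1 + k2).toReal)) ∂μ
      ≤ ∫⁻ t, (ENNReal.ofReal p * ENNReal.ofReal (θ (‖h1 t‖ / a))
          + ENNReal.ofReal q * ENNReal.ofReal (θ (‖h2 t‖ / b))) ∂μ := lintegral_mono hpt
    _ = ENNReal.ofReal p * ∫⁻ t, ENNReal.ofReal (θ (‖h1 t‖ / a)) ∂μ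
          + ENNReal.ofReal q * ∫⁻ t, ENNReal.ofReal (θ (‖h2 t‖ / b)) ∂μ := by
        rw [lintegral_add_left ((adm_meas hpos hmono hθeq hm1 ha.le).const_mul _),
          lintegral_const_mul _ (adm_meas hpos hmono hθeq hm1 ha.le),
          lintegral_const_mul _ (adm_meas hpos hmono hθeq hm2 hb.le)]
    _ ≤ ENNReal.ofReal p * 1 + ENNReal.ofReal q * 1 := by
        gcongr
        · exact h1int μ hμ
        · exact h2int μ hμ
    _ = 1 := by
        rw [mul_one, mul_one, ← ENNReal.ofReal_add hp hq, hpq, ENNReal.ofReal_one]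

theorem adm_chebyshev {h : T → X} (hh : StronglyMeasurable h) {k : ENNReal}
    (hk : AdmM θ M h k) {ε : ℝ} (hε : 0 < ε) {μ : Measure T} (hμ : μ ∈ M) :
    ENNReal.ofReal (θ (ε / k.toReal)) * μ {t | ε ≤ ‖h t‖} ≤ 1 := by
  obtain ⟨hk0, hktop, hint⟩ := hk
  have hKt : 0 < k.toReal := ENNReal.toReal_pos (ne_of_gt hk0) hktop
  set c := ENNReal.ofReal (θ (ε / k.toReal))
  have hsub : {t | ε ≤ ‖h t‖} ⊆ {t | c ≤ ENNReal.ofReal (θ (‖h t‖ / k.toReal))} := by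
    intro t ht
    exact ENNReal.ofReal_le_ofReal (theta_mono hpos hmono hθeq (by positivity)
      (div_le_div_of_nonneg_right ht hKt.le))
  calc c * μ {t | ε ≤ ‖h t‖} ≤ c * μ {t | c ≤ ENNReal.ofReal (θ (‖h t‖ / k.toReal))} :=
        mul_le_mul_right (measure_mono hsub) c
    _ ≤ ∫⁻ t, ENNReal.ofReal (θ (‖h t‖ / k.toReal)) ∂μ :=
        mul_meas_ge_le_lintegral (adm_meas hpos hmono hθeq hh hKt.le) c
    _ ≤ 1 := hint μ hμ

end Adm

/-- If `(fₙ)` is Cauchy in `H^θ(M,X)`, then it converges in norm to some `g ∈ H^θ(M,X)`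
and admits a subsequence converging to `g` pointwise `M`-almost everywhere. -/
theorem henstockOrlicz_complete_ae_subseq {T X : Type*} [MeasurableSpace T]
    [NormedAddCommGroup X] [NormedSpace ℝ X] [CompleteSpace X]
    (M : Set (Measure T)) (hne : M.Nonempty) (hσ : SigmaBounded M)
    (θ : ℝ → ℝ) (hθ : IsYoungFunction θ)
    (f : ℕ → T → X) (hmeas : ∀ n, StronglyMeasurable (f n))
    (hfin : ∀ n, luxNormM θ M (f n) < ⊤)
    (hcauchy : Tendsto (fun p : ℕ × ℕ => luxNormM θ M (fun t => f p.1 t - f p.2 t))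
      atTop (nhds 0)) :
    ∃ g : T → X, StronglyMeasurable g ∧ luxNormM θ M g < ⊤ ∧
      Tendsto (fun n => luxNormM θ M (fun t => f n t - g t)) atTop (nhds 0) ∧
      ∃ φ : ℕ → ℕ, StrictMono φ ∧
        ∃ N : Set T, MeasurableSet N ∧ (∀ μ ∈ M, μ N = 0) ∧
          ∀ t ∉ N, Tendsto (fun k => f (φ k) t) atTop (nhds (g t)) := by
  classical
  obtain ⟨χ, hpos, hmono, -, hχ0, ⟨t0, ht0, hct0⟩, hθeq⟩ := hθ
  have hc : 0 < χ t0 := lt_of_le_of_ne (hpos t0 ht0) (Ne.symm hct0)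
  -- Step 1: eventual admissibility of any positive real for differences
  have key : ∀ e : ℝ, 0 < e → ∃ Q : ℕ, ∀ n m, Q ≤ n → Q ≤ m →
      AdmM θ M (fun t => f n t - f m t) (ENNReal.ofReal e) := by
    intro e he
    have h0 : (0:ENNReal) < ENNReal.ofReal e := ENNReal.ofReal_pos.2 he
    have hev := hcauchy.eventually (Iio_mem_nhds h0)
    rw [eventually_atTop] at hev
    obtain ⟨a, ha⟩ := hev
    refine ⟨max a.1 a.2, fun n m hn hm => ?_⟩
    have h1 := ha (n, m) ⟨le_trans (le_max_left _ _) hn, le_trans (le_max_right _ _) hm⟩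
    rw [luxNormM_eq_s1] at h1
    obtain ⟨k, hk, hklt⟩ := sInf_lt_iff.1 h1
    exact adm_upward hpos hmono hθeq hk hklt.le ENNReal.ofReal_ne_top
  -- Step 2: θ is unbounded
  choose u hu0 huC using fun k : ℕ => theta_unbounded hpos hmono hθeq ht0 hc ((2:ℝ)^k)
  have hupos : ∀ k, 0 < u k := by
    intro k
    by_contra hle
    push_neg at hle
    have h0 : u k = 0 := le_antisymm hle (hu0 k)
    have h1 := huC k
    rw [h0, theta_zero hθeq] at h1
    have h2 : (0:ℝ) < 2^k := by positivity
    linarith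
  set r : ℕ → ℝ := fun k => (1/2:ℝ)^k / u k with hr'
  have hrpos : ∀ k, 0 < r k := fun k => div_pos (by positivity) (hupos k)
  choose Q hQ using fun k => key (r k) (hrpos k)
  -- Step 3: subsequence
  set φ : ℕ → ℕ := fun k => Nat.rec (Q 0) (fun k ih => max (ih + 1) (Q (k+1))) k with hφ'
  have hφmono : StrictMono φ :=
    strictMono_nat_of_lt_succ fun k =>
      lt_of_lt_of_le (Nat.lt_succ_self _) (le_max_left _ _)
  have hφQ : ∀ k, Q k ≤ φ k := by
    intro k
    cases k with
    | zero => exact le_rfl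
    | succ k => exact le_max_right _ _
  have hadm : ∀ k, AdmM θ M (fun t => f (φ (k+1)) t - f (φ k) t) (ENNReal.ofReal (r k)) :=
    fun k => hQ k _ _ (le_trans (hφQ k) (hφmono.monotone (Nat.le_succ k))) (hφQ k)
  -- Step 4: bad sets
  set A : ℕ → Set T := fun k => {t | (1/2:ℝ)^k ≤ ‖f (φ (k+1)) t - f (φ k) t‖} with hA'
  have hAmeas : ∀ k, MeasurableSet (A k) := fun k =>
    measurableSet_le measurable_const ((hmeas _).sub (hmeas _)).norm.measurable
  have hAbound : ∀ μ ∈ M, ∀ k, μ (A k) ≤ (1/2 : ENNReal)^k := by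
    intro μ hμ k
    have hcheb := adm_chebyshev hpos hmono hθeq ((hmeas _).sub (hmeas _)) (hadm k)
      (pow_pos one_half_pos k) hμ
    have htr : (ENNReal.ofReal (r k)).toReal = r k := ENNReal.toReal_ofReal (hrpos k).le
    have hdiv : (1/2:ℝ)^k / r k = u k := by
      rw [hr']
      field_simp
    rw [htr, hdiv] at hcheb
    have h2k : (2:ENNReal)^k ≤ ENNReal.ofReal (θ (u k)) := by
      calc (2:ENNReal)^k = ENNReal.ofReal ((2:ℝ)^k) := by
            rw [ENNReal.ofReal_pow (by norm_num)]; norm_num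
        _ ≤ _ := ENNReal.ofReal_le_ofReal (huC k)
    have h1 : (2:ENNReal)^k * μ (A k) ≤ 1 := le_trans (mul_le_mul_left h2k _) hcheb
    have h2ne : ((2:ENNReal)^k) ≠ 0 := by positivity
    have h2top : ((2:ENNReal)^k) ≠ ⊤ := ENNReal.pow_ne_top (by norm_num)
    calc μ (A k) = ((2:ENNReal)^k)⁻¹ * ((2:ENNReal)^k * μ (A k)) := by
          rw [← mul_assoc, ENNReal.inv_mul_cancel h2ne h2top, one_mul]
      _ ≤ ((2:ENNReal)^k)⁻¹ * 1 := mul_le_mul_right h1 _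
      _ = (1/2 : ENNReal)^k := by rw [mul_one, one_div, ENNReal.inv_pow]
  -- Step 5: the null set
  set N : Set T := limsup A atTop with hN'
  have hNmeas : MeasurableSet N := by
    rw [hN', limsup_eq_iInf_iSup_of_nat]
    simp only [iInf_eq_iInter, iSup_eq_iUnion]
    exact MeasurableSet.iInter fun n => MeasurableSet.iUnion fun k =>
      MeasurableSet.iUnion fun _ => hAmeas k
  have hNnull : ∀ μ ∈ M, μ N = 0 := by
    intro μ hμ
    apply measure_limsup_atTop_eq_zero
    refine ne_top_of_le_ne_top ?_ (ENNReal.tsum_le_tsum (hAbound μ hμ))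
    rw [ENNReal.tsum_geometric]
    simp
  -- Step 6: pointwise convergence off N
  have hconv : ∀ t ∉ N, ∃ L, Tendsto (fun k => f (φ k) t) atTop (nhds L) := by
    intro t ht
    rw [hN', Filter.mem_limsup_iff_frequently_mem, not_frequently] at ht
    obtain ⟨n0, hn0⟩ := eventually_atTop.1 ht
    have hcs : CauchySeq fun j => f (φ (j + n0)) t := by
      apply cauchySeq_of_le_geometric (1/2 : ℝ) ((1/2:ℝ)^n0) (by norm_num)
      intro j
      have hA1 : t ∉ A (j + n0) := hn0 (j + n0) (Nat.le_add_left _ _)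
      rw [hA', Set.mem_setOf_eq, not_le] at hA1
      have heq : j + 1 + n0 = (j + n0) + 1 := by omega
      rw [dist_eq_norm, heq, norm_sub_rev]
      calc ‖f (φ ((j + n0) + 1)) t - f (φ (j + n0)) t‖ ≤ (1/2:ℝ)^(j + n0) := hA1.le
        _ = (1/2:ℝ)^n0 * (1/2:ℝ)^j := by rw [pow_add]; ring
    have hcs2 : CauchySeq fun k => f (φ k) t := (cauchySeq_shift n0).1 hcs
    exact cauchySeq_tendsto_of_complete hcs2
  set g : T → X := fun t => if t ∈ N then 0 else limUnder atTop (fun k => f (φ k) t)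
    with hg'
  have hgt : ∀ t ∉ N, Tendsto (fun k => f (φ k) t) atTop (nhds (g t)) := by
    intro t ht
    obtain ⟨L, hL⟩ := hconv t ht
    have hgL : g t = L := by rw [hg']; simp only [ht, if_false]; exact hL.limUnder_eq
    rw [hgL]; exact hL
  have hgN : ∀ t ∈ N, g t = 0 := fun t ht => by rw [hg']; simp [ht]
  have hgmeas : StronglyMeasurable g := by
    apply stronglyMeasurable_of_tendsto atTop
      (f := fun k => Set.indicator Nᶜ (f (φ k)))
      (fun k => (hmeas (φ k)).indicator hNmeas.compl)
    rw [tendsto_pi_nhds]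
    intro t
    by_cases ht : t ∈ N
    · have h1 : ∀ k, Set.indicator Nᶜ (f (φ k)) t = 0 := fun k =>
        Set.indicator_of_notMem (by simpa using ht) _
      simp only [h1, hgN t ht]
      exact tendsto_const_nhds
    · have h1 : ∀ k, Set.indicator Nᶜ (f (φ k)) t = f (φ k) t := fun k =>
        Set.indicator_of_mem (by simpa using ht) _
      simp only [h1]
      exact hgt t ht
  -- Step 7: eventual admissibility for f n - g
  have key2 : ∀ e : ℝ, 0 < e → ∃ Q2 : ℕ, ∀ n, Q2 ≤ n →
      AdmM θ M (fun t => f n t - g t) (ENNReal.ofReal e) := by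
    intro e he
    obtain ⟨Q2, hQ2⟩ := key e he
    refine ⟨Q2, fun n hn => ?_⟩
    have hofe : (ENNReal.ofReal e).toReal = e := ENNReal.toReal_ofReal he.le
    refine ⟨ENNReal.ofReal_pos.2 he, ENNReal.ofReal_ne_top, fun μ hμ => ?_⟩
    set F : ℕ → T → ENNReal := fun k t => ENNReal.ofReal (θ (‖f n t - f (φ k) t‖ / e))
      with hF'
    have hFmeas : ∀ k, Measurable (F k) := fun k =>
      adm_meas hpos hmono hθeq ((hmeas n).sub (hmeas (φ k))) he.le
    have hae : (fun t => ENNReal.ofReal (θ (‖f n t - g t‖ / (ENNReal.ofReal e).toReal)))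
        =ᵐ[μ] fun t => liminf (fun k => F k t) atTop := by
      have hsub : {t | ¬ (ENNReal.ofReal (θ (‖f n t - g t‖ / (ENNReal.ofReal e).toReal))
          = liminf (fun k => F k t) atTop)} ⊆ N := by
        intro t ht
        by_contra htN
        refine absurd ?_ ht
        show ENNReal.ofReal (θ (‖f n t - g t‖ / (ENNReal.ofReal e).toReal))
            = liminf (fun k => F k t) atTop
        rw [hofe]
        have h1 : Tendsto (fun k => F k t) atTop
            (nhds (ENNReal.ofReal (θ (‖f n t - g t‖ / e)))) := by
          apply ENNReal.tendsto_ofReal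
          apply theta_tendsto hpos hmono hθeq (by positivity) (fun k => by positivity)
          exact ((tendsto_const_nhds.sub (hgt t htN)).norm).div_const e
        exact h1.liminf_eq.symm
      exact measure_mono_null hsub (hNnull μ hμ)
    rw [lintegral_congr_ae hae]
    calc ∫⁻ t, liminf (fun k => F k t) atTop ∂μ
        ≤ liminf (fun k => ∫⁻ t, F k t ∂μ) atTop := lintegral_liminf_le hFmeas
      _ ≤ 1 := by
        apply liminf_le_of_frequently_le'
        apply Eventually.frequently
        filter_upwards [eventually_ge_atTop Q2] with k hk
        have hφk : Q2 ≤ φ k := le_trans hk hφmono.le_apply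
        have h2 := (hQ2 n (φ k) hn hφk).2.2 μ hμ
        simp only [hofe] at h2
        exact h2
  -- Step 8: norm convergence
  have htend : Tendsto (fun n => luxNormM θ M (fun t => f n t - g t)) atTop (nhds 0) := by
    rw [ENNReal.tendsto_atTop_zero]
    intro ε hε
    have hex : ∃ e : ℝ, 0 < e ∧ ENNReal.ofReal e ≤ ε := by
      rcases eq_or_ne ε ⊤ with rfl | htop
      · exact ⟨1, one_pos, le_top⟩
      · exact ⟨ε.toReal, ENNReal.toReal_pos (ne_of_gt hε) htop,
          by rw [ENNReal.ofReal_toReal htop]⟩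
    obtain ⟨e, he, hee⟩ := hex
    obtain ⟨Q2, hQ2⟩ := key2 e he
    refine ⟨Q2, fun n hn => ?_⟩
    calc luxNormM θ M (fun t => f n t - g t) ≤ ENNReal.ofReal e := by
          rw [luxNormM_eq_s1]; exact sInf_le (hQ2 n hn)
      _ ≤ ε := hee
  -- Step 9: g has finite norm
  have hgfin : luxNormM θ M g < ⊤ := by
    obtain ⟨Q2, hQ2⟩ := key2 1 one_pos
    have hadm1 : AdmM θ M (fun t => f Q2 t - g t) (ENNReal.ofReal 1) := hQ2 Q2 le_rfl
    have hadm2 : AdmM θ M (fun t => g t - f Q2 t) (ENNReal.ofReal 1) := by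
      refine ⟨hadm1.1, hadm1.2.1, fun μ hμ => ?_⟩
      have h2 := hadm1.2.2 μ hμ
      have heq : ∀ t, ‖g t - f Q2 t‖ = ‖f Q2 t - g t‖ := fun t => norm_sub_rev _ _
      simp only [heq]
      exact h2
    have hf1 := hfin Q2
    rw [luxNormM_eq_s1] at hf1
    obtain ⟨k1, hk1, hk1top⟩ := sInf_lt_iff.1 hf1
    have hsum : AdmM θ M (fun t => f Q2 t + (g t - f Q2 t)) (k1 + ENNReal.ofReal 1) :=
      adm_add hpos hmono hθeq (hmeas Q2) (hgmeas.sub (hmeas Q2)) hk1 hadm2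
    have hgeq : (fun t => f Q2 t + (g t - f Q2 t)) = g := funext fun t => by abel
    rw [hgeq] at hsum
    calc luxNormM θ M g ≤ k1 + ENNReal.ofReal 1 := by
          rw [luxNormM_eq_s1]; exact sInf_le hsum
      _ < ⊤ := ENNReal.add_lt_top.2 ⟨hk1top, ENNReal.ofReal_lt_top⟩
  exact ⟨g, hgmeas, hgfin, htend, φ, hφmono, N, hNmeas, hNnull, hgt⟩
end

section
/- Let (T, Σ) be a measurable space, M a nonempty σ-bounded family of measures on Σ, X a Banach space, and θ a Young function satisfying the Δ₂-condition. Then for every strongly measurable f : T → X one has ‖f‖_{θ,M} < ∞ if and only if sup_{μ∈M} ∫_T θ(‖f(t)‖) dμ(t) < ∞; that is, H^θ(M,X) = H(M,X), where H(M,X) is the set of strongly measurable f with sup_{μ∈M} ∫_T θ(‖f‖) dμ < ∞. -/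
open MeasureTheory Filter Set

/-- The Δ₂-condition: there is `k > 0` with `θ(2t) ≤ k·θ(t)` for all `t ≥ 0`. -/
def Delta2 (θ : ℝ → ℝ) : Prop :=
  ∃ k : ℝ, 0 < k ∧ ∀ t, 0 ≤ t → θ (2 * t) ≤ k * θ t

section aux
variable {χ : ℝ → ℝ} (h0 : ∀ t, 0 ≤ t → 0 ≤ χ t) (hm : ∀ s t, 0 ≤ s → s ≤ t → χ s ≤ χ t)

include hm in
lemma young_int (a b : ℝ) (ha : 0 ≤ a) (hab : a ≤ b) :
    IntervalIntegrable χ volume a b := by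
  apply MonotoneOn.intervalIntegrable
  intro x hx y hy hxy
  rw [Set.uIcc_of_le hab] at hx hy
  exact hm x y (ha.trans hx.1) hxy

include h0 hm in
lemma young_key_s4 {θ : ℝ → ℝ} (hrep : ∀ u, 0 ≤ u → θ u = ∫ t in (0:ℝ)..u, χ t)
    (a b : ℝ) (ha : 0 ≤ a) (hab : a ≤ b) : b * θ a ≤ a * θ b := by
  have hb : 0 ≤ b := ha.trans hab
  have h1 : θ a ≤ a * χ a := by
    rw [hrep a ha]
    calc ∫ t in (0:ℝ)..a, χ t ≤ ∫ _t in (0:ℝ)..a, χ a := by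
          apply intervalIntegral.integral_mono_on ha (young_int hm 0 a le_rfl ha)
            intervalIntegrable_const
          intro x hx; exact hm x a hx.1 hx.2
      _ = a * χ a := by simp [mul_comm]
  have h2 : (b - a) * χ a ≤ θ b - θ a := by
    have hsplit : θ a + ∫ t in a..b, χ t = θ b := by
      rw [hrep a ha, hrep b hb]
      exact intervalIntegral.integral_add_adjacent_intervals
        (young_int hm 0 a le_rfl ha) (young_int hm a b ha hab)
    have : (b - a) * χ a ≤ ∫ t in a..b, χ t := by
      calc (b - a) * χ a = ∫ _t in a..b, χ a := by simp [mul_comm]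
        _ ≤ ∫ t in a..b, χ t := by
            apply intervalIntegral.integral_mono_on hab intervalIntegrable_const
              (young_int hm a b ha hab)
            intro x hx; exact hm a x ha hx.1
    linarith
  nlinarith [mul_nonneg ha (h0 a ha), mul_nonneg (sub_nonneg.2 hab) (h0 a ha)]

include h0 in
lemma young_nonneg {θ : ℝ → ℝ} (hrep : ∀ u, 0 ≤ u → θ u = ∫ t in (0:ℝ)..u, χ t)
    (u : ℝ) (hu : 0 ≤ u) : 0 ≤ θ u := by
  rw [hrep u hu]
  apply intervalIntegral.integral_nonneg hu
  intro x hx; exact h0 x hx.1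

include h0 hm in
lemma young_mono {θ : ℝ → ℝ} (hrep : ∀ u, 0 ≤ u → θ u = ∫ t in (0:ℝ)..u, χ t)
    (a b : ℝ) (ha : 0 ≤ a) (hab : a ≤ b) : θ a ≤ θ b := by
  have hb : 0 ≤ b := ha.trans hab
  have hsplit : θ a + ∫ t in a..b, χ t = θ b := by
    rw [hrep a ha, hrep b hb]
    exact intervalIntegral.integral_add_adjacent_intervals
      (young_int hm 0 a le_rfl ha) (young_int hm a b ha hab)
  have : 0 ≤ ∫ t in a..b, χ t := by
    apply intervalIntegral.integral_nonneg hab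
    intro x hx; exact h0 x (ha.trans hx.1)
  linarith
end aux

/-- Under the Δ₂-condition, `H^θ(M,X) = H(M,X)` : a strongly measurable `f` has finite
Luxemburg norm iff `sup_{μ∈M} ∫ θ(‖f‖) dμ < ∞`. -/
theorem luxNorm_finite_iff_modular_finite {T X : Type*} [MeasurableSpace T]
    [NormedAddCommGroup X] [NormedSpace ℝ X] [CompleteSpace X]
    (M : Set (Measure T)) (hne : M.Nonempty) (hσ : SigmaBounded M)
    (θ : ℝ → ℝ) (hθ : IsYoungFunction θ) (hΔ : Delta2 θ)
    (f : T → X) (hmeas : StronglyMeasurable f) :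
    luxNormM θ M f < ⊤ ↔ (⨆ μ ∈ M, ∫⁻ t, ENNReal.ofReal (θ ‖f t‖) ∂μ) < ⊤ := by
  obtain ⟨χ, h0, hm, -, hχ0, -, hrep⟩ := hθ
  constructor
  · -- forward: finite Luxemburg norm ⇒ finite modular, via Δ₂
    intro h
    have hS : {k : ENNReal | 0 < k ∧ k ≠ ⊤ ∧
        ∀ μ ∈ M, ∫⁻ t, ENNReal.ofReal (θ (‖f t‖ / k.toReal)) ∂μ ≤ 1}.Nonempty := by
      by_contra hc
      rw [Set.not_nonempty_iff_eq_empty] at hc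
      rw [luxNormM, hc, sInf_empty] at h
      exact absurd h (lt_irrefl _)
    obtain ⟨k₀, hk₀pos, hk₀top, hk₀⟩ := hS
    obtain ⟨k, hkpos, hk2⟩ := hΔ
    set c := k₀.toReal with hc
    have hcpos : 0 < c := ENNReal.toReal_pos hk₀pos.ne' hk₀top
    have hiter : ∀ n : ℕ, ∀ t, 0 ≤ t → θ (2 ^ n * t) ≤ k ^ n * θ t := by
      intro n
      induction n with
      | zero => intro t ht; simp
      | succ n ih =>
        intro t ht
        have h1 : (2:ℝ) ^ (n+1) * t = 2 * (2 ^ n * t) := by ring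
        rw [h1]
        calc θ (2 * (2 ^ n * t)) ≤ k * θ (2 ^ n * t) := hk2 _ (by positivity)
          _ ≤ k * (k ^ n * θ t) := mul_le_mul_of_nonneg_left (ih t ht) hkpos.le
          _ = k ^ (n+1) * θ t := by ring
    obtain ⟨n, hn⟩ := pow_unbounded_of_one_lt c (one_lt_two : (1:ℝ) < 2)
    have hpt : ∀ t, ENNReal.ofReal (θ ‖f t‖) ≤
        ENNReal.ofReal (k ^ n) * ENNReal.ofReal (θ (‖f t‖ / c)) := by
      intro t
      have hu : (0:ℝ) ≤ ‖f t‖ := norm_nonneg _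
      have h1 : θ ‖f t‖ ≤ θ (2 ^ n * (‖f t‖ / c)) := by
        apply young_mono h0 hm hrep _ _ hu
        rw [mul_comm, div_mul_eq_mul_div, le_div_iff₀ hcpos]
        exact mul_le_mul_of_nonneg_left hn.le hu
      have h2 : θ (2 ^ n * (‖f t‖ / c)) ≤ k ^ n * θ (‖f t‖ / c) :=
        hiter n _ (by positivity)
      calc ENNReal.ofReal (θ ‖f t‖) ≤ ENNReal.ofReal (k ^ n * θ (‖f t‖ / c)) :=
            ENNReal.ofReal_le_ofReal (h1.trans h2)
        _ = ENNReal.ofReal (k ^ n) * ENNReal.ofReal (θ (‖f t‖ / c)) :=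
            ENNReal.ofReal_mul (by positivity)
    refine lt_of_le_of_lt (iSup₂_le fun μ hμ => ?_)
      (ENNReal.ofReal_lt_top : ENNReal.ofReal (k ^ n) < ⊤)
    calc ∫⁻ t, ENNReal.ofReal (θ ‖f t‖) ∂μ
        ≤ ∫⁻ t, ENNReal.ofReal (k ^ n) * ENNReal.ofReal (θ (‖f t‖ / c)) ∂μ :=
          lintegral_mono hpt
      _ = ENNReal.ofReal (k ^ n) * ∫⁻ t, ENNReal.ofReal (θ (‖f t‖ / c)) ∂μ :=
          lintegral_const_mul' _ _ ENNReal.ofReal_ne_top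
      _ ≤ ENNReal.ofReal (k ^ n) * 1 := mul_le_mul_right (hk₀ μ hμ) _
      _ = ENNReal.ofReal (k ^ n) := mul_one _
  · -- backward: finite modular ⇒ finite Luxemburg norm
    intro h
    set C := ⨆ μ ∈ M, ∫⁻ t, ENNReal.ofReal (θ ‖f t‖) ∂μ with hCdef
    set K := C + 1 with hKdef
    have hKtop : K ≠ ⊤ := ENNReal.add_ne_top.2 ⟨h.ne, ENNReal.one_ne_top⟩
    have hKpos : (0:ENNReal) < K := lt_of_lt_of_le one_pos le_add_self
    have hc1 : (1:ℝ) ≤ K.toReal := by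
      have := ENNReal.toReal_mono hKtop (le_add_self : (1:ENNReal) ≤ C + 1)
      simpa using this
    have hcpos : (0:ℝ) < K.toReal := lt_of_lt_of_le one_pos hc1
    have hθ0 : θ 0 = 0 := by rw [hrep 0 le_rfl, intervalIntegral.integral_same]
    have hmem : K ∈ {k : ENNReal | 0 < k ∧ k ≠ ⊤ ∧
        ∀ μ ∈ M, ∫⁻ t, ENNReal.ofReal (θ (‖f t‖ / k.toReal)) ∂μ ≤ 1} := by
      refine ⟨hKpos, hKtop, fun μ hμ => ?_⟩
      have hpt : ∀ t, ENNReal.ofReal (θ (‖f t‖ / K.toReal)) ≤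
          ENNReal.ofReal (θ ‖f t‖) * (ENNReal.ofReal K.toReal)⁻¹ := by
        intro t
        set u := ‖f t‖ with hu
        have hun : (0:ℝ) ≤ u := norm_nonneg _
        have hreal : θ (u / K.toReal) ≤ θ u / K.toReal := by
          rcases eq_or_lt_of_le hun with h' | h'
          · rw [← h']
            simp only [zero_div, hθ0]
            exact le_refl 0
          · have key := young_key_s4 h0 hm hrep (u / K.toReal) u
              (div_nonneg hun hcpos.le) (div_le_self hun hc1)
            rw [le_div_iff₀ hcpos]
            have h2 := mul_le_mul_of_nonneg_left key hcpos.le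
            have h3 : K.toReal * (u / K.toReal * θ u) = u * θ u := by
              field_simp
            rw [h3] at h2
            have h4 : u * (θ (u / K.toReal) * K.toReal) ≤ u * θ u := by nlinarith
            exact le_of_mul_le_mul_left h4 h'
        calc ENNReal.ofReal (θ (u / K.toReal)) ≤ ENNReal.ofReal (θ u / K.toReal) :=
              ENNReal.ofReal_le_ofReal hreal
          _ = ENNReal.ofReal (θ u) / ENNReal.ofReal K.toReal :=
              ENNReal.ofReal_div_of_pos hcpos
          _ = ENNReal.ofReal (θ u) * (ENNReal.ofReal K.toReal)⁻¹ := rfl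
      calc ∫⁻ t, ENNReal.ofReal (θ (‖f t‖ / K.toReal)) ∂μ
          ≤ ∫⁻ t, ENNReal.ofReal (θ ‖f t‖) * (ENNReal.ofReal K.toReal)⁻¹ ∂μ :=
            lintegral_mono hpt
        _ = (∫⁻ t, ENNReal.ofReal (θ ‖f t‖) ∂μ) * (ENNReal.ofReal K.toReal)⁻¹ :=
            lintegral_mul_const' _ _
              (ENNReal.inv_ne_top.2 (ENNReal.ofReal_pos.2 hcpos).ne')
        _ ≤ C * (ENNReal.ofReal K.toReal)⁻¹ := by
            gcongr
            rw [hCdef]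
            exact le_biSup (fun μ : Measure T => ∫⁻ t, ENNReal.ofReal (θ ‖f t‖) ∂μ) hμ
        _ = C / K := by rw [ENNReal.ofReal_toReal hKtop]; rfl
        _ ≤ K / K := ENNReal.div_le_div_right le_self_add _
        _ ≤ 1 := ENNReal.div_self_le_one
    exact lt_of_le_of_lt (sInf_le hmem) (lt_top_iff_ne_top.2 hKtop)
end

section
/- Let (T, Σ) be a measurable space, M a nonempty σ-bounded family of measures on Σ, X a Banach space, and θ a Young function satisfying the Δ₂-condition. If (f_n) is a sequence of strongly measurable functions T → X with ‖f_n‖_{θ,M} < ∞ for all n and sup_{μ∈M} ∫_T θ(‖f_n(t)‖) dμ(t) → 0 as n → ∞, then ‖f_n‖_{θ,M} → 0 as n → ∞. -/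
open MeasureTheory Filter Set

/-- Under the Δ₂-condition, modular convergence to `0` implies norm convergence to `0` :
if `sup_{μ∈M} ∫ θ(‖fₙ‖) dμ → 0` then `‖fₙ‖_{θ,M} → 0`. -/
theorem luxNorm_tendsto_zero_of_modular_tendsto_zero {T X : Type*} [MeasurableSpace T]
    [NormedAddCommGroup X] [NormedSpace ℝ X] [CompleteSpace X]
    (M : Set (Measure T)) (hne : M.Nonempty) (hσ : SigmaBounded M)
    (θ : ℝ → ℝ) (hθ : IsYoungFunction θ) (hΔ : Delta2 θ)
    (f : ℕ → T → X) (hmeas : ∀ n, StronglyMeasurable (f n))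
    (hfin : ∀ n, luxNormM θ M (f n) < ⊤)
    (hmod : Tendsto (fun n => ⨆ μ ∈ M, ∫⁻ t, ENNReal.ofReal (θ ‖f n t‖) ∂μ)
      atTop (nhds 0)) :
    Tendsto (fun n => luxNormM θ M (f n)) atTop (nhds 0) := by
  obtain ⟨k, hk, hΔ2⟩ := hΔ
  have hiter : ∀ m : ℕ, ∀ t : ℝ, 0 ≤ t → θ (2 ^ m * t) ≤ k ^ m * θ t := by
    intro m
    induction m with
    | zero => intro t ht; simp
    | succ m ih =>
      intro t ht
      have h1 : θ (2 * (2 ^ m * t)) ≤ k * θ (2 ^ m * t) := hΔ2 _ (by positivity)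
      have h2 : k * θ (2 ^ m * t) ≤ k * (k ^ m * θ t) :=
        mul_le_mul_of_nonneg_left (ih t ht) hk.le
      calc θ (2 ^ (m + 1) * t) = θ (2 * (2 ^ m * t)) := by ring_nf
        _ ≤ k * θ (2 ^ m * t) := h1
        _ ≤ k * (k ^ m * θ t) := h2
        _ = k ^ (m + 1) * θ t := by ring
  rw [ENNReal.tendsto_nhds_zero]
  intro ε hε
  obtain ⟨m, hm⟩ := ENNReal.exists_inv_two_pow_lt hε.ne'
  have hK0 : (0 : ℝ) < k ^ m := pow_pos hk m
  have hc0 : (0 : ENNReal) < 2⁻¹ ^ m := ENNReal.pow_pos (by simp) m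
  have hctop : (2⁻¹ : ENNReal) ^ m ≠ ⊤ := ENNReal.pow_ne_top (by simp)
  have hKtop : ENNReal.ofReal (k ^ m) ≠ ⊤ := ENNReal.ofReal_ne_top
  have hKne : ENNReal.ofReal (k ^ m) ≠ 0 := by
    simpa [ENNReal.ofReal_eq_zero, not_le] using hK0
  have hinvpos : 0 < (ENNReal.ofReal (k ^ m))⁻¹ := ENNReal.inv_pos.mpr hKtop
  have hev := (ENNReal.tendsto_nhds_zero.mp hmod) _ hinvpos
  filter_upwards [hev] with n hn
  refine le_trans (sInf_le ?_) hm.le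
  refine ⟨hc0, hctop, ?_⟩
  intro μ hμ
  have htor : ((2⁻¹ : ENNReal) ^ m).toReal = ((2 : ℝ) ^ m)⁻¹ := by
    rw [ENNReal.toReal_pow, ← inv_pow]
    norm_num
  have key : ∀ t : T, ENNReal.ofReal (θ (‖f n t‖ / ((2⁻¹ : ENNReal) ^ m).toReal))
      ≤ ENNReal.ofReal (k ^ m) * ENNReal.ofReal (θ ‖f n t‖) := by
    intro t
    rw [htor, div_eq_mul_inv, inv_inv, mul_comm ‖f n t‖, ← ENNReal.ofReal_mul hK0.le]
    exact ENNReal.ofReal_le_ofReal (hiter m ‖f n t‖ (norm_nonneg _))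
  calc ∫⁻ t, ENNReal.ofReal (θ (‖f n t‖ / ((2⁻¹ : ENNReal) ^ m).toReal)) ∂μ
      ≤ ∫⁻ t, ENNReal.ofReal (k ^ m) * ENNReal.ofReal (θ ‖f n t‖) ∂μ :=
        lintegral_mono key
    _ = ENNReal.ofReal (k ^ m) * ∫⁻ t, ENNReal.ofReal (θ ‖f n t‖) ∂μ :=
        lintegral_const_mul' _ _ hKtop
    _ ≤ ENNReal.ofReal (k ^ m) * (ENNReal.ofReal (k ^ m))⁻¹ := by
        gcongr
        exact le_trans (le_biSup (fun μ => ∫⁻ t, ENNReal.ofReal (θ ‖f n t‖) ∂μ) hμ) hn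
    _ ≤ 1 := (ENNReal.mul_inv_cancel hKne hKtop).le
end

section
/- Let μ be a non-atomic finite measure on a measurable space (T, Σ) and θ a Young function satisfying the Δ₂-condition. Define the modular B(f) = ∫_T θ(|f(t)|) dμ(t) and the Luxemburg norm ‖f‖_θ for measurable f : T → ℝ. Then the Luxemburg norm is uniformly convex — i.e. for every ε > 0 there exists δ ∈ (0,1) such that all measurable f, g with ‖f‖_θ = ‖g‖_θ = 1 and ‖f − g‖_θ ≥ ε satisfy ‖(f+g)/2‖_θ ≤ 1 − δ — if and only if the modular B is uniformly convex — i.e. for every ε > 0 there exists δ ∈ (0,1) such that all measurable f, g with B(f) = B(g) = 1 and B(f − g) ≥ ε satisfy B((f+g)/2) ≤ 1 − δ. -/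
open MeasureTheory Filter Set

/-- The Luxemburg norm of `f` with respect to the Young function `θ` and the measure
`μ` : `inf {k > 0 : ∫ θ(‖f‖/k) dμ ≤ 1}`. -/
noncomputable def luxNorm {T X : Type*} [MeasurableSpace T] [NormedAddCommGroup X]
    (θ : ℝ → ℝ) (μ : Measure T) (f : T → X) : ENNReal :=
  sInf {k : ENNReal | 0 < k ∧ k ≠ ⊤ ∧
    ∫⁻ t, ENNReal.ofReal (θ (‖f t‖ / k.toReal)) ∂μ ≤ 1}

namespace LuxAux

variable {θ : ℝ → ℝ}

lemma young_mono (hθ : IsYoungFunction θ) {u v : ℝ} (hu : 0 ≤ u) (huv : u ≤ v) :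
    θ u ≤ θ v := by
  obtain ⟨χ, hnn, hmono, -, -, -, hF⟩ := hθ
  have hv : 0 ≤ v := hu.trans huv
  have hint : ∀ x y : ℝ, 0 ≤ x → x ≤ y → IntervalIntegrable χ volume x y := by
    intro x y hx hxy
    apply MonotoneOn.intervalIntegrable
    rw [Set.uIcc_of_le hxy]
    exact fun p hp q hq hpq => hmono p q (hx.trans hp.1) hpq
  have hsub := intervalIntegral.integral_interval_sub_left (hint 0 v le_rfl hv)
    (hint 0 u le_rfl hu)
  have hpos : 0 ≤ ∫ t in u..v, χ t :=
    intervalIntegral.integral_nonneg huv (fun x hx => hnn x (hu.trans hx.1))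
  rw [hF u hu, hF v hv]
  linarith [hsub, hpos]

lemma young_zero (hθ : IsYoungFunction θ) : θ 0 = 0 := by
  obtain ⟨χ, -, -, -, -, -, hF⟩ := hθ
  rw [hF 0 le_rfl, intervalIntegral.integral_same]

lemma young_nonneg (hθ : IsYoungFunction θ) {u : ℝ} (hu : 0 ≤ u) : 0 ≤ θ u := by
  have := young_mono hθ le_rfl hu
  rw [young_zero hθ] at this; exact this

lemma young_convex (hθ : IsYoungFunction θ) {a b l : ℝ} (ha : 0 ≤ a) (hab : a ≤ b)
    (hl0 : 0 ≤ l) (hl1 : l ≤ 1) :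
    θ ((1 - l) * a + l * b) ≤ (1 - l) * θ a + l * θ b := by
  obtain ⟨χ, hnn, hmono, -, -, -, hF⟩ := hθ
  have hb : 0 ≤ b := ha.trans hab
  set m : ℝ := (1 - l) * a + l * b with hm
  have ham : a ≤ m := by nlinarith
  have hmb : m ≤ b := by nlinarith
  have hm0 : 0 ≤ m := ha.trans ham
  have hint : ∀ x y : ℝ, 0 ≤ x → x ≤ y → IntervalIntegrable χ volume x y := by
    intro x y hx hxy
    apply MonotoneOn.intervalIntegrable
    rw [Set.uIcc_of_le hxy]
    exact fun p hp q hq hpq => hmono p q (hx.trans hp.1) hpq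
  have h1 : θ m - θ a = ∫ t in a..m, χ t := by
    rw [hF m hm0, hF a ha]
    exact intervalIntegral.integral_interval_sub_left (hint 0 m le_rfl hm0)
      (hint 0 a le_rfl ha)
  have h2 : θ b - θ m = ∫ t in m..b, χ t := by
    rw [hF b hb, hF m hm0]
    exact intervalIntegral.integral_interval_sub_left (hint 0 b le_rfl hb)
      (hint 0 m le_rfl hm0)
  have hup : (∫ t in a..m, χ t) ≤ (m - a) * χ m := by
    have := intervalIntegral.integral_mono_on ham (hint a m ha ham)
      intervalIntegrable_const (fun x hx => hmono x m (ha.trans hx.1) hx.2)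
    simpa [smul_eq_mul] using this
  have hlo : (b - m) * χ m ≤ ∫ t in m..b, χ t := by
    have := intervalIntegral.integral_mono_on hmb intervalIntegrable_const
      (hint m b hm0 hmb) (fun x hx => hmono m x hm0 hx.1)
    simpa [smul_eq_mul] using this
  have e1 : l * (θ b - θ m) ≥ l * ((b - m) * χ m) := by
    rw [h2]; exact mul_le_mul_of_nonneg_left hlo hl0
  have e2 : (1 - l) * (θ m - θ a) ≤ (1 - l) * ((m - a) * χ m) := by
    rw [h1]; exact mul_le_mul_of_nonneg_left hup (by linarith)
  have key : l * ((b - m) * χ m) = (1 - l) * ((m - a) * χ m) := by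
    have : l * (b - m) = (1 - l) * (m - a) := by rw [hm]; ring
    calc l * ((b - m) * χ m) = (l * (b - m)) * χ m := by ring
      _ = ((1 - l) * (m - a)) * χ m := by rw [this]
      _ = (1 - l) * ((m - a) * χ m) := by ring
  linarith [e1, e2, key]

lemma young_contract (hθ : IsYoungFunction θ) {c u : ℝ} (hc0 : 0 ≤ c) (hc1 : c ≤ 1)
    (hu : 0 ≤ u) : θ (c * u) ≤ c * θ u := by
  have := young_convex hθ (le_refl (0:ℝ)) hu hc0 hc1
  simpa [young_zero hθ] using this

lemma young_dilate (hθ : IsYoungFunction θ) {k₁ : ℝ}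
    (hk₁ : ∀ u, 0 ≤ u → θ (2 * u) ≤ k₁ * θ u)
    {t u : ℝ} (ht0 : 0 ≤ t) (ht1 : t ≤ 1) (hu : 0 ≤ u) :
    θ ((1 + t) * u) ≤ (1 + t * (k₁ - 1)) * θ u := by
  have h1 : θ ((1 - t) * u + t * (2 * u)) ≤ (1 - t) * θ u + t * θ (2 * u) :=
    young_convex hθ hu (by linarith) ht0 ht1
  have h3 : (1 - t) * u + t * (2 * u) = (1 + t) * u := by ring
  rw [h3] at h1
  have h2 : t * θ (2 * u) ≤ t * (k₁ * θ u) :=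
    mul_le_mul_of_nonneg_left (hk₁ u hu) ht0
  nlinarith [h1, h2]





variable {θ : ℝ → ℝ} {T : Type*} [MeasurableSpace T] {μ : Measure T}

lemma luxNorm_eq (f : T → ℝ) : luxNorm θ μ f =
    sInf {k : ENNReal | 0 < k ∧ k ≠ ⊤ ∧
      ∫⁻ t, ENNReal.ofReal (θ (|f t| / k.toReal)) ∂μ ≤ 1} := by
  simp only [luxNorm, Real.norm_eq_abs]

lemma lux_le (f : T → ℝ) {c : ℝ} (hc : 0 < c)
    (h : ∫⁻ t, ENNReal.ofReal (θ (|f t| / c)) ∂μ ≤ 1) :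
    luxNorm θ μ f ≤ ENNReal.ofReal c := by
  rw [luxNorm_eq]
  apply sInf_le
  refine ⟨ENNReal.ofReal_pos.2 hc, ENNReal.ofReal_ne_top, ?_⟩
  rw [ENNReal.toReal_ofReal hc.le]; exact h

lemma modc_le (hθ : IsYoungFunction θ) (f : T → ℝ) {c : ℝ} (hc : 0 < c)
    (h : luxNorm θ μ f < ENNReal.ofReal c) :
    ∫⁻ t, ENNReal.ofReal (θ (|f t| / c)) ∂μ ≤ 1 := by
  rw [luxNorm_eq] at h
  obtain ⟨k, ⟨hk0, hktop, hkint⟩, hklt⟩ := sInf_lt_iff.mp h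
  have hs0 : 0 < k.toReal := ENNReal.toReal_pos hk0.ne' hktop
  have hsc : k.toReal ≤ c := ENNReal.toReal_le_of_le_ofReal hc.le hklt.le
  refine le_trans (lintegral_mono fun t => ?_) hkint
  apply ENNReal.ofReal_le_ofReal
  refine young_mono hθ (by positivity) ?_
  exact div_le_div_of_nonneg_left (abs_nonneg _) hs0 hsc

/-- If `luxNorm f < ofReal c` with `0 < c ≤ 1` then the modular of `f` is `≤ ofReal c`. -/
lemma mod_le_of_lux_lt (hθ : IsYoungFunction θ) (f : T → ℝ) {c : ℝ} (hc0 : 0 < c)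
    (hc1 : c ≤ 1) (h : luxNorm θ μ f < ENNReal.ofReal c) :
    ∫⁻ t, ENNReal.ofReal (θ |f t|) ∂μ ≤ ENNReal.ofReal c := by
  have h2 := modc_le hθ f hc0 h
  calc ∫⁻ t, ENNReal.ofReal (θ |f t|) ∂μ
      ≤ ∫⁻ t, ENNReal.ofReal c * ENNReal.ofReal (θ (|f t| / c)) ∂μ := by
        refine lintegral_mono fun t => ?_
        dsimp only
        rw [← ENNReal.ofReal_mul hc0.le]
        apply ENNReal.ofReal_le_ofReal
        have hcc : c * (|f t| / c) = |f t| := by field_simp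
        calc θ |f t| = θ (c * (|f t| / c)) := by rw [hcc]
          _ ≤ c * θ (|f t| / c) := young_contract hθ hc0.le hc1 (by positivity)
    _ = ENNReal.ofReal c * ∫⁻ t, ENNReal.ofReal (θ (|f t| / c)) ∂μ :=
        lintegral_const_mul' _ _ ENNReal.ofReal_ne_top
    _ ≤ ENNReal.ofReal c * 1 := by gcongr
    _ = ENNReal.ofReal c := mul_one _

/-- Integrated dilation estimate. -/
lemma mod_dilate (hθ : IsYoungFunction θ) {k₁ : ℝ}
    (hk₁ : ∀ u, 0 ≤ u → θ (2 * u) ≤ k₁ * θ u) (hk₁1 : 1 ≤ k₁)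
    {t : ℝ} (ht0 : 0 ≤ t) (ht1 : t ≤ 1) (f : T → ℝ) :
    ∫⁻ x, ENNReal.ofReal (θ ((1 + t) * |f x|)) ∂μ ≤
      ENNReal.ofReal (1 + t * (k₁ - 1)) * ∫⁻ x, ENNReal.ofReal (θ |f x|) ∂μ := by
  calc ∫⁻ x, ENNReal.ofReal (θ ((1 + t) * |f x|)) ∂μ
      ≤ ∫⁻ x, ENNReal.ofReal (1 + t * (k₁ - 1)) * ENNReal.ofReal (θ |f x|) ∂μ := by
        refine lintegral_mono fun x => ?_
        dsimp only
        rw [← ENNReal.ofReal_mul (by nlinarith)]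
        exact ENNReal.ofReal_le_ofReal
          (young_dilate hθ hk₁ ht0 ht1 (abs_nonneg _))
    _ = _ := lintegral_const_mul' _ _ ENNReal.ofReal_ne_top

lemma lux_le_recip (f : T → ℝ) {t : ℝ} (ht0 : 0 < t)
    (h : ∫⁻ x, ENNReal.ofReal (θ ((1 + t) * |f x|)) ∂μ ≤ 1) :
    luxNorm θ μ f ≤ ENNReal.ofReal (1 / (1 + t)) := by
  apply lux_le f (by positivity)
  have : ∀ x : T, |f x| / (1 / (1 + t)) = (1 + t) * |f x| := by
    intro x; rw [one_div, div_eq_mul_inv, inv_inv, mul_comm]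
  simpa only [this] using h

/-- `B f = 1 → ‖f‖ = 1` (no Δ₂ needed). -/
lemma lux_eq_one_of_mod_eq_one (hθ : IsYoungFunction θ) (f : T → ℝ)
    (h1 : ∫⁻ x, ENNReal.ofReal (θ |f x|) ∂μ = 1) : luxNorm θ μ f = 1 := by
  have hle : luxNorm θ μ f ≤ ENNReal.ofReal 1 := by
    apply lux_le f one_pos
    simpa [div_one] using le_of_eq h1
  rw [ENNReal.ofReal_one] at hle
  refine le_antisymm hle ?_
  by_contra hcon
  push_neg at hcon
  obtain ⟨r, hr0, hlt1, hlt2⟩ := ENNReal.lt_iff_exists_real_btwn.mp hcon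
  have hr0' : 0 < r := by
    by_contra hr
    push_neg at hr
    simp [ENNReal.ofReal_eq_zero.2 hr] at hlt1
  have hr1 : r < 1 := ENNReal.ofReal_lt_one.mp hlt2
  have := mod_le_of_lux_lt hθ f hr0' hr1.le hlt1
  rw [h1] at this
  exact absurd (this.trans_lt hlt2) (lt_irrefl _)

/-- `‖f‖ = 1 → B f = 1` (needs Δ₂). -/
lemma mod_eq_one_of_lux_eq_one (hθ : IsYoungFunction θ) {k₁ : ℝ}
    (hk₁ : ∀ u, 0 ≤ u → θ (2 * u) ≤ k₁ * θ u) (hk₁1 : 1 ≤ k₁)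
    (f : T → ℝ) (h1 : luxNorm θ μ f = 1) :
    ∫⁻ x, ENNReal.ofReal (θ |f x|) ∂μ = 1 := by
  have hk₁0 : 0 < k₁ := by linarith
  -- upper bound
  have hub : ∀ s : ℝ, 0 < s → s ≤ 1 →
      ∫⁻ x, ENNReal.ofReal (θ |f x|) ∂μ ≤ ENNReal.ofReal (1 + s * (k₁ - 1)) := by
    intro s hs0 hs1
    have hlt : luxNorm θ μ f < ENNReal.ofReal (1 + s) := by
      rw [h1, ← ENNReal.ofReal_one]
      exact (ENNReal.ofReal_lt_ofReal_iff (by linarith)).2 (by linarith)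
    have h2 := modc_le hθ f (by linarith) hlt
    calc ∫⁻ x, ENNReal.ofReal (θ |f x|) ∂μ
        ≤ ∫⁻ x, ENNReal.ofReal (1 + s * (k₁ - 1)) *
            ENNReal.ofReal (θ (|f x| / (1 + s))) ∂μ := by
          refine lintegral_mono fun x => ?_
          dsimp only
          rw [← ENNReal.ofReal_mul (by nlinarith)]
          apply ENNReal.ofReal_le_ofReal
          have hux : (1 + s) * (|f x| / (1 + s)) = |f x| := by field_simp
          calc θ |f x| = θ ((1 + s) * (|f x| / (1 + s))) := by rw [hux]
            _ ≤ (1 + s * (k₁ - 1)) * θ (|f x| / (1 + s)) :=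
              young_dilate hθ hk₁ hs0.le hs1 (by positivity)
      _ = ENNReal.ofReal (1 + s * (k₁ - 1)) *
            ∫⁻ x, ENNReal.ofReal (θ (|f x| / (1 + s))) ∂μ :=
          lintegral_const_mul' _ _ ENNReal.ofReal_ne_top
      _ ≤ ENNReal.ofReal (1 + s * (k₁ - 1)) * 1 := by gcongr
      _ = _ := mul_one _
  have hB1 : ∫⁻ x, ENNReal.ofReal (θ |f x|) ∂μ ≤ 1 := by
    have htend : Tendsto (fun n : ℕ => ENNReal.ofReal (1 + (1 / (n + 1)) * (k₁ - 1)))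
        atTop (nhds (ENNReal.ofReal 1)) := by
      apply ENNReal.tendsto_ofReal
      have h0 : Tendsto (fun n : ℕ => (1 / ((n : ℝ) + 1)) * (k₁ - 1)) atTop (nhds (0 * (k₁ - 1))) :=
        tendsto_one_div_add_atTop_nhds_zero_nat.mul_const _
      rw [zero_mul] at h0
      have := h0.const_add (1 : ℝ)
      simpa using this
    rw [ENNReal.ofReal_one] at htend
    refine ge_of_tendsto' htend (fun n => ?_)
    exact hub (1 / (n + 1)) (by positivity) (by
      rw [div_le_one (by positivity)]; linarith [Nat.cast_nonneg (α := ℝ) n])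
  -- lower bound
  refine le_antisymm hB1 ?_
  by_contra hcon
  push_neg at hcon
  have hlt : ∫⁻ x, ENNReal.ofReal (θ |f x|) ∂μ < 1 := lt_of_le_of_ne hB1 (by
    intro h; exact absurd h.ge (not_le.2 hcon))
  set B := ∫⁻ x, ENNReal.ofReal (θ |f x|) ∂μ with hBdef
  have hBtop : B ≠ ⊤ := (hlt.trans_le le_top).ne
  set a : ℝ := B.toReal with hadef
  have ha0 : 0 ≤ a := ENNReal.toReal_nonneg
  have ha1 : a < 1 := by
    have : B < ENNReal.ofReal 1 := by rwa [ENNReal.ofReal_one]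
    exact ENNReal.toReal_lt_of_lt_ofReal this
  have hBa : B = ENNReal.ofReal a := (ENNReal.ofReal_toReal hBtop).symm
  set t : ℝ := (1 - a) / k₁ with htdef
  have ht0 : 0 < t := div_pos (by linarith) hk₁0
  have ht1 : t ≤ 1 := by
    rw [htdef, div_le_one hk₁0]; linarith
  have htk : t * k₁ = 1 - a := div_mul_cancel₀ _ hk₁0.ne'
  have hd := mod_dilate hθ hk₁ hk₁1 ht0.le ht1 f (μ := μ)
  have hd1 : ∫⁻ x, ENNReal.ofReal (θ ((1 + t) * |f x|)) ∂μ ≤ 1 := by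
    refine hd.trans ?_
    rw [← hBdef, hBa, ← ENNReal.ofReal_mul (by nlinarith)]
    rw [← ENNReal.ofReal_one]
    apply ENNReal.ofReal_le_ofReal
    nlinarith [mul_nonneg ht0.le (sub_nonneg.2 ha1.le), mul_nonneg ht0.le ha0]
  have hlux := lux_le_recip f ht0 hd1
  rw [h1] at hlux
  have : ENNReal.ofReal (1 / (1 + t)) < 1 := by
    rw [ENNReal.ofReal_lt_one, div_lt_one (by linarith)]; linarith
  exact absurd (hlux.trans_lt this) (lt_irrefl _)

/-- doubling iterated. -/
lemma mod_pow_two (hθ : IsYoungFunction θ) {k₁ : ℝ}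
    (hk₁ : ∀ u, 0 ≤ u → θ (2 * u) ≤ k₁ * θ u) (hk₁1 : 1 ≤ k₁) (f : T → ℝ) (n : ℕ) :
    ∫⁻ x, ENNReal.ofReal (θ (2 ^ n * |f x|)) ∂μ ≤
      ENNReal.ofReal (k₁ ^ n) * ∫⁻ x, ENNReal.ofReal (θ |f x|) ∂μ := by
  have hk₁0 : (0:ℝ) < k₁ := by linarith
  induction n with
  | zero => simp
  | succ n ih =>
    calc ∫⁻ x, ENNReal.ofReal (θ (2 ^ (n + 1) * |f x|)) ∂μ
        ≤ ∫⁻ x, ENNReal.ofReal k₁ * ENNReal.ofReal (θ (2 ^ n * |f x|)) ∂μ := by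
          refine lintegral_mono fun x => ?_
          dsimp only
          rw [← ENNReal.ofReal_mul hk₁0.le]
          apply ENNReal.ofReal_le_ofReal
          have h2 : (2:ℝ) ^ (n+1) * |f x| = 2 * (2 ^ n * |f x|) := by ring
          rw [h2]
          exact hk₁ _ (by positivity)
      _ = ENNReal.ofReal k₁ * ∫⁻ x, ENNReal.ofReal (θ (2 ^ n * |f x|)) ∂μ :=
          lintegral_const_mul' _ _ ENNReal.ofReal_ne_top
      _ ≤ ENNReal.ofReal k₁ * (ENNReal.ofReal (k₁ ^ n) *
            ∫⁻ x, ENNReal.ofReal (θ |f x|) ∂μ) := by gcongr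
      _ = ENNReal.ofReal (k₁ ^ (n + 1)) * ∫⁻ x, ENNReal.ofReal (θ |f x|) ∂μ := by
          rw [← mul_assoc, ← ENNReal.ofReal_mul hk₁0.le, ← pow_succ']

lemma lux_small_of_mod_small (hθ : IsYoungFunction θ) {k₁ : ℝ}
    (hk₁ : ∀ u, 0 ≤ u → θ (2 * u) ≤ k₁ * θ u) (hk₁1 : 1 ≤ k₁) (f : T → ℝ) (n : ℕ)
    (h : ∫⁻ x, ENNReal.ofReal (θ |f x|) ∂μ ≤ ENNReal.ofReal ((1 / k₁) ^ n)) :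
    luxNorm θ μ f ≤ ENNReal.ofReal ((1 / 2 : ℝ) ^ n) := by
  have hk₁0 : (0:ℝ) < k₁ := by linarith
  apply lux_le f (by positivity)
  have hrw : ∀ x : T, |f x| / (1 / 2 : ℝ) ^ n = 2 ^ n * |f x| := by
    intro x
    rw [div_pow, one_pow, div_div_eq_mul_div, div_one]; ring
  calc ∫⁻ x, ENNReal.ofReal (θ (|f x| / (1 / 2 : ℝ) ^ n)) ∂μ
      = ∫⁻ x, ENNReal.ofReal (θ (2 ^ n * |f x|)) ∂μ := by
        simp only [hrw]
    _ ≤ ENNReal.ofReal (k₁ ^ n) * ∫⁻ x, ENNReal.ofReal (θ |f x|) ∂μ :=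
        mod_pow_two hθ hk₁ hk₁1 f n
    _ ≤ ENNReal.ofReal (k₁ ^ n) * ENNReal.ofReal ((1 / k₁) ^ n) := by gcongr
    _ = 1 := by
        rw [← ENNReal.ofReal_mul (by positivity), ← mul_pow]
        rw [mul_one_div_cancel hk₁0.ne', one_pow, ENNReal.ofReal_one]

end LuxAux

/-- For a non-atomic finite measure and a Young function satisfying Δ₂, the Luxemburg norm
is uniformly convex iff the modular `B(f) = ∫ θ(|f|) dμ` is uniformly convex. -/
theorem luxNorm_uniformlyConvex_iff_modular {T : Type*} [MeasurableSpace T]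
    (μ : Measure T) [IsFiniteMeasure μ]
    (hatomless : ∀ E : Set T, MeasurableSet E → 0 < μ E →
      ∃ F, F ⊆ E ∧ MeasurableSet F ∧ 0 < μ F ∧ μ F < μ E)
    (θ : ℝ → ℝ) (hθ : IsYoungFunction θ) (hΔ : Delta2 θ) :
    ((∀ ε : ℝ, 0 < ε → ∃ δ : ℝ, 0 < δ ∧ δ < 1 ∧
        ∀ f g : T → ℝ, Measurable f → Measurable g →
          luxNorm θ μ f = 1 → luxNorm θ μ g = 1 →
          ENNReal.ofReal ε ≤ luxNorm θ μ (fun t => f t - g t) →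
          luxNorm θ μ (fun t => (f t + g t) / 2) ≤ ENNReal.ofReal (1 - δ)) ↔
      (∀ ε : ℝ, 0 < ε → ∃ δ : ℝ, 0 < δ ∧ δ < 1 ∧
        ∀ f g : T → ℝ, Measurable f → Measurable g →
          (∫⁻ t, ENNReal.ofReal (θ |f t|) ∂μ) = 1 →
          (∫⁻ t, ENNReal.ofReal (θ |g t|) ∂μ) = 1 →
          ENNReal.ofReal ε ≤ (∫⁻ t, ENNReal.ofReal (θ |f t - g t|) ∂μ) →
          (∫⁻ t, ENNReal.ofReal (θ (|(f t + g t) / 2|)) ∂μ) ≤ ENNReal.ofReal (1 - δ))) := by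
  classical
  obtain ⟨k, hk0, hkle⟩ := hΔ
  set k₁ : ℝ := max k 2 with hk₁def
  have hk₁2 : (2:ℝ) ≤ k₁ := le_max_right _ _
  have hk₁1 : (1:ℝ) ≤ k₁ := by linarith
  have hk₁0 : (0:ℝ) < k₁ := by linarith
  have hk₁ : ∀ u, 0 ≤ u → θ (2 * u) ≤ k₁ * θ u := fun u hu =>
    (hkle u hu).trans (mul_le_mul_of_nonneg_right (le_max_left _ _)
      (LuxAux.young_nonneg hθ hu))
  constructor
  · -- norm UC → modular UC
    intro H ε hε
    have hε₀ : (0:ℝ) < min ε 1 / 2 := by positivity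
    obtain ⟨δ, hδ0, hδ1, hH⟩ := H (min ε 1 / 2) hε₀
    refine ⟨δ / 2, by positivity, by linarith, ?_⟩
    intro f g hf hg hBf hBg hBfg
    have hf1 : luxNorm θ μ f = 1 := LuxAux.lux_eq_one_of_mod_eq_one hθ f hBf
    have hg1 : luxNorm θ μ g = 1 := LuxAux.lux_eq_one_of_mod_eq_one hθ g hBg
    have hfg : ENNReal.ofReal (min ε 1 / 2) ≤ luxNorm θ μ (fun t => f t - g t) := by
      by_contra hcon
      push_neg at hcon
      have hB := LuxAux.mod_le_of_lux_lt hθ (fun t => f t - g t) hε₀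
        (by linarith [min_le_right ε 1]) hcon
      have h2 : ENNReal.ofReal ε ≤ ENNReal.ofReal (min ε 1 / 2) := le_trans hBfg hB
      have h3 : ε ≤ min ε 1 / 2 := (ENNReal.ofReal_le_ofReal_iff hε₀.le).mp h2
      have : min ε 1 / 2 < ε := by
        have := min_le_left ε 1; linarith
      linarith
    have hmid := hH f g hf hg hf1 hg1 hfg
    have hlt : luxNorm θ μ (fun t => (f t + g t) / 2) < ENNReal.ofReal (1 - δ / 2) :=
      lt_of_le_of_lt hmid ((ENNReal.ofReal_lt_ofReal_iff (by linarith)).2 (by linarith))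
    exact LuxAux.mod_le_of_lux_lt hθ (fun t => (f t + g t) / 2) (by linarith)
      (by linarith) hlt
  · -- modular UC → norm UC
    intro H ε hε
    obtain ⟨n, hn⟩ := exists_pow_lt_of_lt_one hε (by norm_num : (1/2:ℝ) < 1)
    have hε'0 : (0:ℝ) < (1 / k₁) ^ n := by positivity
    obtain ⟨δ', hδ'0, hδ'1, hH⟩ := H ((1 / k₁) ^ n) hε'0
    set t : ℝ := δ' / k₁ with htdef
    have ht0 : 0 < t := by positivity
    have ht1 : t ≤ 1 := by
      rw [htdef, div_le_one hk₁0]; linarith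
    have htk : t * k₁ = δ' := div_mul_cancel₀ _ hk₁0.ne'
    refine ⟨t / (1 + t), by positivity, ?_, ?_⟩
    · rw [div_lt_one (by linarith)]; linarith
    intro f g hf hg hf1 hg1 hfg
    have hBf := LuxAux.mod_eq_one_of_lux_eq_one hθ hk₁ hk₁1 f hf1
    have hBg := LuxAux.mod_eq_one_of_lux_eq_one hθ hk₁ hk₁1 g hg1
    have hBfg : ENNReal.ofReal ((1 / k₁) ^ n) ≤
        ∫⁻ x, ENNReal.ofReal (θ |f x - g x|) ∂μ := by
      by_contra hcon
      push_neg at hcon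
      have hsm := LuxAux.lux_small_of_mod_small hθ hk₁ hk₁1 (fun x => f x - g x) n
        hcon.le
      have h2 : ENNReal.ofReal ε ≤ ENNReal.ofReal ((1/2:ℝ) ^ n) := hfg.trans hsm
      have h3 : ε ≤ (1/2:ℝ) ^ n := (ENNReal.ofReal_le_ofReal_iff (by positivity)).mp h2
      linarith
    have hmid := hH f g hf hg hBf hBg hBfg
    have hd := LuxAux.mod_dilate hθ hk₁ hk₁1 ht0.le ht1
      (fun x => (f x + g x) / 2) (μ := μ)
    have hd1 : ∫⁻ x, ENNReal.ofReal (θ ((1 + t) * |(f x + g x) / 2|)) ∂μ ≤ 1 := by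
      refine hd.trans ?_
      calc ENNReal.ofReal (1 + t * (k₁ - 1)) *
            ∫⁻ x, ENNReal.ofReal (θ |(f x + g x) / 2|) ∂μ
          ≤ ENNReal.ofReal (1 + t * (k₁ - 1)) * ENNReal.ofReal (1 - δ') :=
            mul_le_mul_right hmid _
        _ = ENNReal.ofReal ((1 + t * (k₁ - 1)) * (1 - δ')) := by
            rw [← ENNReal.ofReal_mul (by nlinarith)]
        _ ≤ 1 := by
            rw [← ENNReal.ofReal_one]
            apply ENNReal.ofReal_le_ofReal
            nlinarith [mul_nonneg ht0.le (sub_nonneg.2 hδ'1.le),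
              mul_nonneg ht0.le (by linarith : (0:ℝ) ≤ k₁ - 1)]
    have hlux := LuxAux.lux_le_recip (fun x => (f x + g x) / 2) ht0 hd1
    have hrw : 1 - t / (1 + t) = 1 / (1 + t) := by field_simp; ring
    rw [hrw]
    exact hlux
end

section
/- Let μ be a finite measure on a measurable space (T, Σ), X a Banach space, and θ a Young function satisfying the Δ₂-condition. Then the Luxemburg norm on H^θ(μ,X) is absolutely continuous: for every strongly measurable f : T → X with ‖f‖_{θ,μ} < ∞ and every decreasing sequence (G_n) of sets in Σ with μ(G_n) → 0, one has ‖f·1_{G_n}‖_{θ,μ} → 0 as n → ∞. -/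
open MeasureTheory Filter Set

section Aux

variable {θ : ℝ → ℝ}

lemma young_intervalIntegrable (hθ : IsYoungFunction θ) :
    True := trivial

lemma young_monoOn (hθ : IsYoungFunction θ) :
    ∀ u v, 0 ≤ u → u ≤ v → θ u ≤ θ v := by
  obtain ⟨χ, hpos, hmono, -, hzero, -, hrep⟩ := hθ
  have hint : ∀ a b : ℝ, 0 ≤ a → a ≤ b → IntervalIntegrable χ MeasureTheory.volume a b := by
    intro a b ha hab
    apply MonotoneOn.intervalIntegrable
    intro x hx y hy hxy
    rw [Set.uIcc_of_le hab] at hx hy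
    exact hmono x y (ha.trans hx.1) hxy
  intro u v hu huv
  rw [hrep u hu, hrep v (hu.trans huv)]
  have := intervalIntegral.integral_add_adjacent_intervals (hint 0 u le_rfl hu)
    (hint u v hu huv)
  rw [← this]
  have hnn : 0 ≤ ∫ t in u..v, χ t := by
    apply intervalIntegral.integral_nonneg huv
    intro x hx
    exact hpos x (hu.trans hx.1)
  linarith

lemma young_zero (hθ : IsYoungFunction θ) : θ 0 = 0 := by
  obtain ⟨χ, -, -, -, -, -, hrep⟩ := hθ
  rw [hrep 0 le_rfl, intervalIntegral.integral_same]

lemma young_nonneg_s13 (hθ : IsYoungFunction θ) {u : ℝ} (hu : 0 ≤ u) : 0 ≤ θ u := by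
  rw [← young_zero hθ]
  exact young_monoOn hθ 0 u le_rfl hu

lemma young_measurable (hθ : IsYoungFunction θ) :
    Measurable (fun u => θ (max u 0)) := by
  apply Monotone.measurable
  intro u v huv
  exact young_monoOn hθ _ _ (le_max_right u 0) (max_le_max huv le_rfl)

lemma delta2_pow (hθ : IsYoungFunction θ) {k : ℝ} (hk : 0 < k)
    (hΔ : ∀ t, 0 ≤ t → θ (2 * t) ≤ k * θ t) (m : ℕ) :
    ∀ t, 0 ≤ t → θ (2 ^ m * t) ≤ k ^ m * θ t := by
  induction m with
  | zero => intro t ht; simp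
  | succ n ih =>
    intro t ht
    have h1 : (2 : ℝ) ^ (n + 1) * t = 2 * (2 ^ n * t) := by ring
    have h2 : (0 : ℝ) ≤ 2 ^ n * t := by positivity
    calc θ (2 ^ (n + 1) * t) = θ (2 * (2 ^ n * t)) := by rw [h1]
      _ ≤ k * θ (2 ^ n * t) := hΔ _ h2
      _ ≤ k * (k ^ n * θ t) := by
          exact mul_le_mul_of_nonneg_left (ih t ht) hk.le
      _ = k ^ (n + 1) * θ t := by ring

end Aux

/-- For a finite measure and a Young function satisfying Δ₂, the Luxemburg norm on
`H^θ(μ,X)` is absolutely continuous: if `(Gₙ)` is a decreasing sequence of measurable sets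
with `μ(Gₙ) → 0`, then `‖f·1_{Gₙ}‖_{θ,μ} → 0`. -/
theorem luxNorm_indicator_tendsto_zero {T X : Type*} [MeasurableSpace T]
    [NormedAddCommGroup X] [NormedSpace ℝ X] [CompleteSpace X]
    (μ : Measure T) [IsFiniteMeasure μ]
    (θ : ℝ → ℝ) (hθ : IsYoungFunction θ) (hΔ : Delta2 θ)
    (f : T → X) (hmeas : StronglyMeasurable f) (hfin : luxNorm θ μ f < ⊤)
    (G : ℕ → Set T) (hGmeas : ∀ n, MeasurableSet (G n))
    (hGmono : ∀ n, G (n + 1) ⊆ G n)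
    (hG0 : Tendsto (fun n => μ (G n)) atTop (nhds 0)) :
    Tendsto (fun n => luxNorm θ μ ((G n).indicator f)) atTop (nhds 0) := by
  obtain ⟨k, hk, hΔk⟩ := hΔ
  -- extract a finite Luxemburg bound for f
  have hS : {k : ENNReal | 0 < k ∧ k ≠ ⊤ ∧
      ∫⁻ t, ENNReal.ofReal (θ (‖f t‖ / k.toReal)) ∂μ ≤ 1}.Nonempty := by
    by_contra h
    rw [Set.not_nonempty_iff_eq_empty] at h
    rw [luxNorm, h, sInf_empty] at hfin
    exact absurd hfin (lt_irrefl _)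
  obtain ⟨k₀, hk₀pos, hk₀top, hk₀int⟩ := hS
  set c₀ : ℝ := k₀.toReal with hc₀
  have hc₀pos : 0 < c₀ := ENNReal.toReal_pos hk₀pos.ne' hk₀top
  rw [ENNReal.tendsto_nhds_zero]
  intro ε hε
  rcases eq_or_ne ε ⊤ with rfl | hεtop
  · filter_upwards with n using le_top
  set e : ℝ := ε.toReal with he
  have hepos : 0 < e := ENNReal.toReal_pos hε.ne' hεtop
  -- choose m with c₀ ≤ 2^m * e
  obtain ⟨m, hm⟩ : ∃ m : ℕ, c₀ / e ≤ 2 ^ m := by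
    obtain ⟨m, hm⟩ := pow_unbounded_of_one_lt (c₀ / e) (one_lt_two (α := ℝ))
    exact ⟨m, hm.le⟩
  have hme : c₀ ≤ 2 ^ m * e := by
    rw [div_le_iff₀ hepos] at hm
    linarith
  -- the dominating function
  set g : T → ENNReal := fun t => ENNReal.ofReal (θ (‖f t‖ / e)) with hg
  have hgmeas : Measurable g := by
    have h1 : Measurable fun t => ‖f t‖ / e := (hmeas.norm.measurable).div_const e
    have h2 : ∀ t, θ (‖f t‖ / e) = θ (max (‖f t‖ / e) 0) := by
      intro t
      rw [max_eq_left (by positivity)]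
    have : Measurable fun t => θ (max (‖f t‖ / e) 0) :=
      (young_measurable hθ).comp h1
    exact ENNReal.measurable_ofReal.comp (by simpa [← h2] using this)
  -- pointwise bound : θ(‖f t‖/e) ≤ k^m θ(‖f t‖/c₀)
  have hptwise : ∀ t, θ (‖f t‖ / e) ≤ k ^ m * θ (‖f t‖ / c₀) := by
    intro t
    have hnf : (0 : ℝ) ≤ ‖f t‖ := norm_nonneg _
    have h2me : (0 : ℝ) < 2 ^ m * e := by positivity
    have hs : (0 : ℝ) ≤ ‖f t‖ / (2 ^ m * e) := by positivity
    have heq : ‖f t‖ / e = 2 ^ m * (‖f t‖ / (2 ^ m * e)) := by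
      field_simp
    calc θ (‖f t‖ / e) = θ (2 ^ m * (‖f t‖ / (2 ^ m * e))) := by rw [heq]
      _ ≤ k ^ m * θ (‖f t‖ / (2 ^ m * e)) := delta2_pow hθ hk hΔk m _ hs
      _ ≤ k ^ m * θ (‖f t‖ / c₀) := by
          apply mul_le_mul_of_nonneg_left _ (by positivity)
          exact young_monoOn hθ _ _ hs (div_le_div_of_nonneg_left hnf hc₀pos hme)
  -- g has finite integral
  have hgfin : ∫⁻ t, g t ∂μ ≠ ⊤ := by
    have hbound : ∫⁻ t, g t ∂μ ≤ ENNReal.ofReal (k ^ m) *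
        ∫⁻ t, ENNReal.ofReal (θ (‖f t‖ / c₀)) ∂μ := by
      rw [← lintegral_const_mul' _ _ ENNReal.ofReal_ne_top]
      apply lintegral_mono
      intro t
      show ENNReal.ofReal (θ (‖f t‖ / e)) ≤
        ENNReal.ofReal (k ^ m) * ENNReal.ofReal (θ (‖f t‖ / c₀))
      rw [← ENNReal.ofReal_mul (by positivity : (0:ℝ) ≤ k ^ m)]
      exact ENNReal.ofReal_le_ofReal (hptwise t)
    refine ne_top_of_le_ne_top ?_ hbound
    exact ENNReal.mul_ne_top ENNReal.ofReal_ne_top (ne_top_of_le_ne_top ENNReal.one_ne_top hk₀int)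
  -- absolute continuity of the integral of g
  have habs : Tendsto (fun n => ∫⁻ t in G n, g t ∂μ) atTop (nhds 0) :=
    tendsto_setLIntegral_zero hgfin hG0
  have hev : ∀ᶠ n in atTop, ∫⁻ t in G n, g t ∂μ ≤ 1 := by
    filter_upwards [(ENNReal.tendsto_nhds_zero.mp habs) 1 one_pos] with n hn using hn
  filter_upwards [hev] with n hn
  -- show luxNorm of the indicator is ≤ ε
  apply sInf_le
  refine ⟨hε, hεtop, ?_⟩
  have hind : ∀ t, ENNReal.ofReal (θ (‖(G n).indicator f t‖ / ε.toReal)) =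
      (G n).indicator g t := by
    intro t
    by_cases ht : t ∈ G n
    · simp [Set.indicator_of_mem ht, hg, he]
    · simp [Set.indicator_of_notMem ht, young_zero hθ]
  calc ∫⁻ t, ENNReal.ofReal (θ (‖(G n).indicator f t‖ / ε.toReal)) ∂μ
      = ∫⁻ t, (G n).indicator g t ∂μ := by
        apply lintegral_congr; exact hind
    _ = ∫⁻ t in G n, g t ∂μ := lintegral_indicator (hGmeas n) g
    _ ≤ 1 := hn
end
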